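/- arXiv:1709.05192 — 5 statements merged into one kernel-verified Lean document; each statement's English description precedes it below -/
import Mathlib

section
/- Let B be a separable real Banach space, and let (X_n)_{n≥1} be a sequence of independent B-valued random variables on a probability space (Ω, P) such that, almost surely, the partial sums Σ_{n≤N} X_n converge in B as N → ∞; let X denote the almost sure limit. Then the support of the law of X equals the closure in B of the set of all s ∈ B for which there exists a sequence (x_n)_{n≥1} with x_n in the support of the law of X_n for every n and Σ_{n≤N} x_n → s as N → ∞. -/
noncomputable section
open MeasureTheory Set

/-- `e(z) = exp(2πiz)`. -/
def e (z : ℂ) : ℂ := Complex.exp (2 * Real.pi * Complex.I * z)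

/-- Fourier coefficient `f̂(h) = ∫₀¹ f(t) e(-ht) dt`. -/
def fourierCoeff01 (f : ℝ → ℂ) (h : ℤ) : ℂ := ∫ t in (0:ℝ)..(1:ℝ), f t * e (-(h : ℂ) * (t : ℂ))

/-- The set `S`: continuous `f : [0,1] → ℂ` with `f(0)=0`, `f(1)` real in `[-2,2]`, and
`g(t) = f(t) - t·f(1)` has purely imaginary Fourier coefficients with `|ĝ(h)| ≤ 1/(π|h|)`. -/
def memS (f : ℝ → ℂ) : Prop :=
  ContinuousOn f (Set.Icc 0 1) ∧ f 0 = 0 ∧ (f 1).im = 0 ∧ |(f 1).re| ≤ 2 ∧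
  ∀ h : ℤ, h ≠ 0 →
    (fourierCoeff01 (fun t => f t - (t : ℂ) * f 1) h).re = 0 ∧
    ‖fourierCoeff01 (fun t => f t - (t : ℂ) * f 1) h‖ ≤ 1 / (Real.pi * |(h : ℝ)|)

open Filter ProbabilityTheory Topology

lemma ae_mem_support' {B : Type*} [TopologicalSpace B] [SecondCountableTopology B]
    [MeasurableSpace B] {Ω : Type*} [MeasurableSpace Ω] (P : Measure Ω) (f : Ω → B) :
    ∀ᵐ ω ∂P, ∀ U : Set B, IsOpen U → f ω ∈ U → 0 < P (f ⁻¹' U) := by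
  obtain ⟨b, hbc, -, hbb⟩ := TopologicalSpace.exists_countable_basis B
  rw [ae_iff]
  have hnull : P (⋃ U ∈ {U | U ∈ b ∧ P (f ⁻¹' U) = 0}, f ⁻¹' U) = 0 := by
    rw [measure_biUnion_null_iff (hbc.mono (fun U hU => hU.1))]
    exact fun U hU => hU.2
  refine measure_mono_null (fun ω hω => ?_) hnull
  simp only [Set.mem_setOf_eq, not_forall, not_lt] at hω
  obtain ⟨U, hUo, hmem, hP⟩ := hω
  obtain ⟨V, hVb, hxV, hVU⟩ := hbb.exists_subset_of_mem_open hmem hUo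
  exact Set.mem_biUnion ⟨hVb, le_antisymm
    (le_trans (measure_mono (Set.preimage_mono hVU)) hP) zero_le⟩ hxV


lemma exists_measurable_limit_trim {Ω : Type*} {B : Type*} [NormedAddCommGroup B]
    [TopologicalSpace.SeparableSpace B] [CompleteSpace B] [MeasurableSpace B] [BorelSpace B]
    {m' m0 : MeasurableSpace Ω} (hle : m' ≤ m0) (P : @MeasureTheory.Measure Ω m0)
    (T : ℕ → Ω → B) (hT : ∀ M, Measurable[m'] (T M))
    (hae : ∀ᵐ ω ∂P, ∃ c, Tendsto (fun M => T M ω) atTop (𝓝 c)) :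
    ∃ T' : Ω → B, Measurable[m'] T' ∧
      ∀ᵐ ω ∂P, Tendsto (fun M => T M ω) atTop (𝓝 (T' ω)) := by
  letI := m'
  have hG : MeasurableSet {ω | ∃ c, Tendsto (fun M => T M ω) atTop (𝓝 c)} :=
    measurableSet_exists_tendsto hT
  have hae' : ∀ᵐ ω ∂(P.trim hle), ∃ c, Tendsto (fun M => T M ω) atTop (𝓝 c) := by
    rw [ae_iff]
    have h2 : {ω | ¬ ∃ c, Tendsto (fun M => T M ω) atTop (𝓝 c)}
        = {ω | ∃ c, Tendsto (fun M => T M ω) atTop (𝓝 c)}ᶜ := rfl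
    rw [h2, trim_measurableSet_eq hle hG.compl]
    exact ae_iff.1 hae
  obtain ⟨T', h1, h2⟩ := measurable_limit_of_tendsto_metrizable_ae
      (fun M => (hT M).aemeasurable) hae'
  exact ⟨T', h1, ae_of_ae_trim hle h2⟩

/-- Support of almost surely convergent series of independent Banach-valued random
variables: the support of the law of X = Σ X_n is the closure of the set of sums of
convergent series Σ x_n with x_n in the support of the law of X_n. -/
theorem stmt_4
    {B : Type*} [NormedAddCommGroup B] [NormedSpace ℝ B] [CompleteSpace B]
    [TopologicalSpace.SeparableSpace B] [MeasurableSpace B] [BorelSpace B]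
    {Ω : Type*} [MeasurableSpace Ω] (P : Measure Ω) [IsProbabilityMeasure P]
    (Xn : ℕ → Ω → B) (hmeas : ∀ n, Measurable (Xn n))
    (hindep : ProbabilityTheory.iIndepFun Xn P)
    (X : Ω → B)
    (hconv : ∀ᵐ ω ∂P,
      Filter.Tendsto (fun N => ∑ n ∈ Finset.range N, Xn n ω) Filter.atTop (nhds (X ω))) :
    {s : B | ∀ U : Set B, IsOpen U → s ∈ U → 0 < P (X ⁻¹' U)} =
      closure {s : B | ∃ x : ℕ → B,
        (∀ n, ∀ U : Set B, IsOpen U → x n ∈ U → 0 < P (Xn n ⁻¹' U)) ∧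
        Filter.Tendsto (fun N => ∑ n ∈ Finset.range N, x n) Filter.atTop (nhds s)} := by
  classical
  set A := {s : B | ∃ x : ℕ → B,
        (∀ n, ∀ U : Set B, IsOpen U → x n ∈ U → 0 < P (Xn n ⁻¹' U)) ∧
        Filter.Tendsto (fun N => ∑ n ∈ Finset.range N, x n) Filter.atTop (nhds s)} with hA
  set S : ℕ → Ω → B := fun N ω => ∑ n ∈ Finset.range N, Xn n ω with hS
  have hSmeas : ∀ N, Measurable (S N) := fun N => Finset.measurable_sum _ fun n _ => hmeas n
  obtain ⟨X', hX'meas, hX'lim⟩ :=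
    measurable_limit_of_tendsto_metrizable_ae (L := atTop) (μ := P) (f := S)
      (fun N => (hSmeas N).aemeasurable) (hconv.mono fun ω h => ⟨_, h⟩)
  have hXX' : ∀ᵐ ω ∂P, X ω = X' ω := by
    filter_upwards [hconv, hX'lim] with ω h1 h2
    exact tendsto_nhds_unique h1 h2
  -- a.e. X ∈ A
  have hAae : ∀ᵐ ω ∂P, X ω ∈ A := by
    filter_upwards [hconv, ae_all_iff.2 (fun n => ae_mem_support' P (Xn n))] with ω h1 h2
    exact ⟨fun n => Xn n ω, h2, h1⟩
  refine Set.Subset.antisymm ?_ ?_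
  · intro s hs
    by_contra hns
    have h1 : 0 < P (X ⁻¹' (closure A)ᶜ) :=
      hs _ isClosed_closure.isOpen_compl hns
    have h2 : P (X ⁻¹' (closure A)ᶜ) = 0 := by
      refine measure_mono_null (fun ω hω => ?_) (ae_iff.1 hAae)
      exact fun hmem => hω (subset_closure hmem)
    exact absurd h2 h1.ne'
  · -- closure A ⊆ support
    have hclosed : IsClosed {s : B | ∀ U : Set B, IsOpen U → s ∈ U → 0 < P (X ⁻¹' U)} := by
      rw [← isOpen_compl_iff, isOpen_iff_mem_nhds]
      intro s hs
      simp only [Set.mem_compl_iff, Set.mem_setOf_eq, not_forall, not_lt] at hs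
      obtain ⟨U, hUo, hsU, hP⟩ := hs
      refine Filter.mem_of_superset (hUo.mem_nhds hsU) (fun y hy => ?_)
      simp only [Set.mem_compl_iff, Set.mem_setOf_eq, not_forall, not_lt]
      exact ⟨U, hUo, hy, hP⟩
    refine closure_minimal ?_ hclosed
    rintro a ⟨x, hxsupp, hxsum⟩ U hUo haU
    obtain ⟨ε, hε, hball⟩ := Metric.isOpen_iff.1 hUo a haU
    set δ : ℝ := ε / 4 with hδ
    have hδpos : 0 < δ := by positivity
    -- choose N₁ for the x-sums
    obtain ⟨N₁, hN₁⟩ := (Metric.tendsto_atTop.1 hxsum) δ hδpos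
    -- events C N
    set C : ℕ → Set Ω := fun N => ⋂ M ∈ {M | N ≤ M}, {ω | dist (S M ω) (X' ω) < δ} with hC
    have hCiUnion : ∀ᵐ ω ∂P, ω ∈ ⋃ N, C N := by
      filter_upwards [hconv, hXX'] with ω h1 h2
      rw [h2] at h1
      obtain ⟨N, hN⟩ := (Metric.tendsto_atTop.1 h1) δ hδpos
      exact Set.mem_iUnion.2 ⟨N, Set.mem_biInter fun M hM => hN M hM⟩
    obtain ⟨N₀, hN₀⟩ : ∃ N₀, P (C N₀) ≠ 0 := by
      by_contra h
      push_neg at h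
      have h0 : P (⋃ N, C N) = 0 := measure_iUnion_null h
      have h1 : P {ω | ω ∉ ⋃ N, C N} = 0 := ae_iff.1 hCiUnion
      have : P Set.univ = 0 := by
        refine measure_mono_null (fun ω _ => ?_) (measure_union_null h0 h1)
        by_cases hω : ω ∈ ⋃ N, C N
        · exact Or.inl hω
        · exact Or.inr hω
      simpa using this
    set N : ℕ := max N₀ N₁ with hN
    -- radius
    set r : ℝ := δ / (N + 1) with hr
    have hrpos : 0 < r := by positivity
    -- the head event F
    set F : Set Ω := ⋂ n ∈ Finset.range N, (Xn n) ⁻¹' Metric.ball (x n) r with hF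
    -- tail sums
    set T : ℕ → Ω → B := fun M ω => ∑ n ∈ Finset.Ico N M, Xn n ω with hT
    have hm'le : (⨆ n ∈ {n : ℕ | n < N}ᶜ, MeasurableSpace.comap (Xn n) inferInstance)
        ≤ ‹MeasurableSpace Ω› :=
      iSup₂_le fun n _ => (hmeas n).comap_le
    set m' : MeasurableSpace Ω :=
      ⨆ n ∈ {n : ℕ | n < N}ᶜ, MeasurableSpace.comap (Xn n) inferInstance with hm'
    have hXnm' : ∀ n ∈ ({n : ℕ | n < N}ᶜ : Set ℕ), Measurable[m'] (Xn n) := by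
      intro n hn
      have h1 : Measurable[MeasurableSpace.comap (Xn n) inferInstance] (Xn n) :=
        Measurable.of_comap_le le_rfl
      exact h1.mono (le_iSup₂ (f := fun n (_ : n ∈ ({n : ℕ | n < N}ᶜ : Set ℕ)) =>
        MeasurableSpace.comap (Xn n) inferInstance) n hn) le_rfl
    have hTmeas : ∀ M, Measurable[m'] (T M) := by
      intro M
      refine Finset.measurable_sum _ (fun n hn => ?_)
      refine hXnm' n ?_
      simp only [Set.mem_compl_iff, Set.mem_setOf_eq, not_lt]
      exact (Finset.mem_Ico.1 hn).1
    have hTtail : ∀ᵐ ω ∂P, Tendsto (fun M => T M ω) atTop (𝓝 (X' ω - S N ω)) := by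
      filter_upwards [hX'lim] with ω h1
      have heq : ∀ᶠ M in atTop, S M ω - S N ω = T M ω := by
        filter_upwards [eventually_ge_atTop N] with M hM
        simp only [hT, hS]
        rw [Finset.sum_Ico_eq_sub _ hM]
      exact (h1.sub_const (S N ω)).congr' heq
    -- the trimmed measure and tail limit
    have hae0 : ∀ᵐ ω ∂P, ∃ c, Tendsto (fun M => T M ω) atTop (𝓝 c) :=
      hTtail.mono fun ω h => ⟨_, h⟩
    obtain ⟨T', hT'meas, hT'lim⟩ :=
      exists_measurable_limit_trim hm'le P T hTmeas hae0
    have hT'eq : ∀ᵐ ω ∂P, T' ω = X' ω - S N ω := by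
      filter_upwards [hT'lim, hTtail] with ω h1 h2
      exact tendsto_nhds_unique h1 h2
    -- the tail event E'
    set E : Set Ω := {ω | ‖T' ω‖ < δ} with hE
    have hEmeas : MeasurableSet[m'] E := by
      have : E = (fun ω => ‖T' ω‖) ⁻¹' (Set.Iio δ) := rfl
      rw [this]
      exact hT'meas.norm measurableSet_Iio
    -- positivity of P E
    have hCE : P (C N₀) ≤ P E := by
      refine measure_mono_ae ?_
      filter_upwards [hT'eq] with ω h1 hω
      have h2 : dist (S N ω) (X' ω) < δ := Set.mem_iInter₂.1 hω N (show N₀ ≤ N from le_max_left _ _)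
      show ‖T' ω‖ < δ
      rw [h1, ← dist_eq_norm, dist_comm]
      exact h2
    have hEpos : P E ≠ 0 := fun h => hN₀ (le_antisymm (h ▸ hCE) zero_le)
    -- positivity of P F
    have hmeasF : ∀ n, MeasurableSet[MeasurableSpace.comap (Xn n) inferInstance]
        ((Xn n) ⁻¹' Metric.ball (x n) r) := fun n => ⟨_, measurableSet_ball, rfl⟩
    have hPF : P F = ∏ n ∈ Finset.range N, P ((Xn n) ⁻¹' Metric.ball (x n) r) :=
      hindep.meas_biInter (fun n _ => hmeasF n)
    have hFpos : P F ≠ 0 := by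
      rw [hPF, Finset.prod_ne_zero_iff]
      exact fun n _ => (hxsupp n _ Metric.isOpen_ball (Metric.mem_ball_self hrpos)).ne'
    -- independence of F and E
    have hFmeasSup : MeasurableSet[⨆ n ∈ {n : ℕ | n < N},
        MeasurableSpace.comap (Xn n) inferInstance] F := by
      refine MeasurableSet.biInter (Finset.range N).countable_toSet (fun n hn => ?_)
      have hle : MeasurableSpace.comap (Xn n) inferInstance ≤
          ⨆ n ∈ {n : ℕ | n < N}, MeasurableSpace.comap (Xn n) inferInstance :=
        le_iSup₂ (f := fun n (_ : n ∈ {n : ℕ | n < N}) =>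
          MeasurableSpace.comap (Xn n) inferInstance) n (Finset.mem_range.1 hn)
      exact hle _ (hmeasF n)
    have hindep2 := ProbabilityTheory.indep_biSup_compl
      (fun n => (hmeas n).comap_le) hindep.iIndep {n : ℕ | n < N}
    have hPFE : P (F ∩ E) = P F * P E :=
      (ProbabilityTheory.Indep_iff _ _ _).1 hindep2 F E hFmeasSup hEmeas
    have hFEpos : P (F ∩ E) ≠ 0 := by
      rw [hPFE]
      exact mul_ne_zero hFpos hEpos
    -- now F ∩ E a.e. implies X ∈ U
    have hsub : ∀ᵐ ω ∂P, ω ∈ F ∩ E → X ω ∈ U := by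
      filter_upwards [hXX', hT'eq] with ω h1 h2 hω
      obtain ⟨hωF, hωE⟩ := hω
      apply hball
      have d1 : dist (X' ω) (S N ω) < δ := by
        rw [dist_eq_norm, ← h2]
        exact hωE
      have d2 : dist (S N ω) (∑ n ∈ Finset.range N, x n) ≤ δ := by
        calc dist (S N ω) (∑ n ∈ Finset.range N, x n)
            ≤ ∑ n ∈ Finset.range N, dist (Xn n ω) (x n) := dist_sum_sum_le _ _ _
          _ ≤ ∑ n ∈ Finset.range N, r := by
              refine Finset.sum_le_sum (fun n hn => ?_)
              exact le_of_lt (Metric.mem_ball.1 (Set.mem_iInter₂.1 hωF n hn))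
          _ = N * r := by simp [Finset.sum_const, mul_comm]
          _ ≤ δ := by
              have hN1 : (0:ℝ) < (N:ℝ) + 1 := by positivity
              calc (N:ℝ) * r = (N:ℝ) * δ / ((N:ℝ)+1) := by rw [hr]; ring
                _ ≤ δ := by rw [div_le_iff₀ hN1]; nlinarith [hδpos.le]
      have d3 : dist (∑ n ∈ Finset.range N, x n) a < δ := hN₁ N (le_max_right _ _)
      have : dist (X ω) a < ε := by
        rw [h1]
        calc dist (X' ω) a ≤ dist (X' ω) (S N ω) + dist (S N ω) (∑ n ∈ Finset.range N, x n)
              + dist (∑ n ∈ Finset.range N, x n) a := dist_triangle4 _ _ _ _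
          _ < δ + δ + δ := by linarith
          _ < ε := by rw [hδ]; linarith
      exact Metric.mem_ball.2 this
    -- conclude
    have hnull : P ((F ∩ E) \ (X ⁻¹' U)) = 0 := by
      refine measure_mono_null (fun ω hω => ?_) (ae_iff.1 hsub)
      simp only [Set.mem_setOf_eq, not_forall]
      exact ⟨hω.1, hω.2⟩
    have hle2 : P (F ∩ E) ≤ P (X ⁻¹' U) := by
      calc P (F ∩ E) ≤ P ((F ∩ E) ∩ (X ⁻¹' U)) + P ((F ∩ E) \ (X ⁻¹' U)) :=
            measure_le_inter_add_diff _ _ _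
        _ = P ((F ∩ E) ∩ (X ⁻¹' U)) := by rw [hnull, add_zero]
        _ ≤ P (X ⁻¹' U) := measure_mono Set.inter_subset_right
    exact lt_of_lt_of_le (pos_iff_ne_zero.2 hFEpos) hle2

end
end

section
/- Let X ⊆ ℂ be a nonempty compact subset. The following are equivalent: (1) there exists f ∈ F₀ such that X = f([0,1]); (2) 0 ∈ X, there exists a real number α such that X is invariant under the reflection z ↦ 2α − conj(z) (the symmetry with respect to the line Re(z) = α), and there exists a continuous function f : [0,1] → ℂ with X = f([0,1]); (3) 0 ∈ X, there exists a real number α such that X is invariant under the reflection z ↦ 2α − conj(z), and X is connected and locally connected (as a topological subspace of ℂ). -/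
noncomputable section
open MeasureTheory Set

/-- Membership in F₀: continuous on [0,1], f(0) = 0 and f(t) + conj(f(1-t)) = f(1). -/
def memF0 (f : ℝ → ℂ) : Prop :=
  ContinuousOn f (Set.Icc 0 1) ∧ f 0 = 0 ∧
    ∀ t ∈ Set.Icc (0:ℝ) 1, f t + (starRingEnd ℂ) (f (1 - t)) = f 1


set_option maxHeartbeats 1000000
set_option linter.unusedVariables false

namespace HM
open Metric Filter Topology



/-- A finite chain of points in `S` with consecutive distances `< δ`. -/
def IsChainF (δ : ℝ) (S : Set ℂ) (n : ℕ) (f : ℕ → ℂ) : Prop :=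
  (∀ j ≤ n, f j ∈ S) ∧ ∀ j < n, dist (f j) (f (j+1)) < δ

lemma IsChainF.mono {δ δ' : ℝ} {S S' : Set ℂ} {n f} (h : IsChainF δ S n f)
    (hδ : δ ≤ δ') (hS : S ⊆ S') : IsChainF δ' S' n f :=
  ⟨fun j hj => hS (h.1 j hj), fun j hj => lt_of_lt_of_le (h.2 j hj) hδ⟩

/-- Concatenation of chains. -/
def cat (n : ℕ) (f g : ℕ → ℂ) : ℕ → ℂ := fun j => if j < n then f j else g (j - n)

lemma cat_left {n : ℕ} {f g : ℕ → ℂ} (hend : f n = g 0) {j : ℕ} (h : j ≤ n) :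
    cat n f g j = f j := by
  rcases lt_or_eq_of_le h with h' | h'
  · simp [cat, h']
  · subst h'; simp [cat, hend]

lemma cat_right {n : ℕ} {f g : ℕ → ℂ} (j : ℕ) : cat n f g (n + j) = g j := by
  simp [cat]

lemma cat_chain {δ : ℝ} {S : Set ℂ} {n m : ℕ} {f g : ℕ → ℂ}
    (hf : IsChainF δ S n f) (hg : IsChainF δ S m g) (hend : f n = g 0) :
    IsChainF δ S (n + m) (cat n f g) := by
  constructor
  · intro j hj
    by_cases h : j < n
    · simpa [cat, h] using hf.1 j h.le
    · push_neg at h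
      have : j - n ≤ m := by omega
      simpa [cat, h.not_gt] using hg.1 _ this
  · intro j hj
    by_cases h : j < n
    · have h1 : cat n f g j = f j := cat_left hend h.le
      have h2 : cat n f g (j+1) = f (j+1) := cat_left hend (by omega)
      rw [h1, h2]; exact hf.2 j h
    · push_neg at h
      obtain ⟨j', rfl⟩ : ∃ j', j = n + j' := ⟨j - n, by omega⟩
      have h1 : cat n f g (n + j') = g j' := cat_right j'
      have h2 : cat n f g (n + j' + 1) = g (j' + 1) := by
        have : n + j' + 1 = n + (j' + 1) := by omega
        rw [this, cat_right]
      rw [h1, h2]; exact hg.2 j' (by omega)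

/-- Chain-reachability within `S` at scale `δ`. -/
def Reach (δ : ℝ) (S : Set ℂ) (x y : ℂ) : Prop :=
  ∃ n f, f 0 = x ∧ f n = y ∧ IsChainF δ S n f

lemma Reach.refl {δ : ℝ} {S : Set ℂ} {x : ℂ} (hx : x ∈ S) : Reach δ S x x :=
  ⟨0, fun _ => x, rfl, rfl, fun _ _ => hx, fun j hj => absurd hj (Nat.not_lt_zero j)⟩

lemma Reach.step {δ : ℝ} {S : Set ℂ} {x y y' : ℂ} (h : Reach δ S x y)
    (hy' : y' ∈ S) (hd : dist y y' < δ) : Reach δ S x y' := by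
  obtain ⟨n, f, h0, hn, hc⟩ := h
  refine ⟨n + 1, cat n f (fun j => if j = 0 then y else y'), ?_, ?_, ?_⟩
  · rw [cat_left (by simp [hn]) (Nat.zero_le n), h0]
  · have := cat_right (n := n) (f := f) (g := fun j => if j = 0 then y else y') 1
    simpa using this
  · refine cat_chain hc ⟨?_, ?_⟩ (by simp [hn])
    · intro j hj
      by_cases h : j = 0
      · subst h; simp only [if_pos rfl]; exact hn ▸ hc.1 n le_rfl
      · simp [h, hy']
    · intro j hj
      interval_cases j
      simpa using hd

lemma reach_of_preconnected {S : Set ℂ} (hS : IsPreconnected S) {δ : ℝ} (hδ : 0 < δ)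
    {x y : ℂ} (hx : x ∈ S) (hy : y ∈ S) : Reach δ S x y := by
  by_contra hcon
  set u : Set ℂ := ⋃ z ∈ {z ∈ S | Reach δ S x z}, ball z δ with hu
  set v : Set ℂ := ⋃ z ∈ {z ∈ S | ¬ Reach δ S x z}, ball z δ with hv
  have hou : IsOpen u := isOpen_biUnion fun _ _ => isOpen_ball
  have hov : IsOpen v := isOpen_biUnion fun _ _ => isOpen_ball
  have hcover : S ⊆ u ∪ v := by
    intro z hz
    by_cases h : Reach δ S x z
    · exact Or.inl (mem_biUnion ⟨hz, h⟩ (mem_ball_self hδ))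
    · exact Or.inr (mem_biUnion ⟨hz, h⟩ (mem_ball_self hδ))
  have hSu : (S ∩ u).Nonempty :=
    ⟨x, hx, mem_biUnion ⟨hx, Reach.refl hx⟩ (mem_ball_self hδ)⟩
  have hSv : (S ∩ v).Nonempty :=
    ⟨y, hy, mem_biUnion ⟨hy, hcon⟩ (mem_ball_self hδ)⟩
  obtain ⟨z, hzS, hzu, hzv⟩ := hS u v hou hov hcover hSu hSv
  obtain ⟨a, ha, hza⟩ := mem_iUnion₂.1 hzu
  obtain ⟨b, hb, hzb⟩ := mem_iUnion₂.1 hzv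
  rw [mem_setOf_eq] at ha hb
  have h1 : Reach δ S x z := ha.2.step hzS (by rw [dist_comm]; exact mem_ball.1 hza)
  exact hb.2 (h1.step hb.1 (mem_ball.1 hzb))



/-- Uniform local connectedness for a compact, locally connected set. -/
lemma unif_loc_conn {K : Set ℂ} (hK : IsCompact K) (hLC : LocallyConnectedSpace K)
    {ε : ℝ} (hε : 0 < ε) :
    ∃ δ, 0 < δ ∧ δ ≤ ε ∧ ∀ x ∈ K, ∀ y ∈ K, dist x y < δ →
      ∃ S, S ⊆ K ∧ IsPreconnected S ∧ x ∈ S ∧ y ∈ S ∧ S ⊆ closedBall x ε := by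
  have key : ∀ z : K, ∃ O : Set ℂ, IsOpen O ∧ (z : ℂ) ∈ O ∧ IsPreconnected (O ∩ K) ∧
      O ∩ K ⊆ ball (z : ℂ) (ε/2) := by
    intro z
    have hU : (Subtype.val ⁻¹' (ball (z : ℂ) (ε/2)) : Set K) ∈ nhds z :=
      continuous_subtype_val.continuousAt.preimage_mem_nhds
        (ball_mem_nhds _ (by linarith))
    obtain ⟨V, hVU, hVopen, hzV, hVconn⟩ :=
      (locallyConnectedSpace_iff_subsets_isOpen_isConnected.1 hLC) z _ hU
    obtain ⟨O, hO, hOV⟩ := isOpen_induced_iff.1 hVopen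
    refine ⟨O, hO, ?_, ?_, ?_⟩
    · have : z ∈ V := hzV
      rw [← hOV] at this; exact this
    · have himg : Subtype.val '' V = O ∩ K := by
        rw [← hOV, Subtype.image_preimage_coe]; exact inter_comm _ _
      rw [← himg]
      exact (Topology.IsInducing.subtypeVal).isPreconnected_image.2 hVconn.isPreconnected
    · intro w hw
      have hwK : w ∈ K := hw.2
      have : (⟨w, hwK⟩ : K) ∈ V := by rw [← hOV]; exact hw.1
      exact hVU this
  choose O hOopen hzO hOconn hOball using key
  have hcover : K ⊆ ⋃ z : K, O z := fun x hx =>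
    mem_iUnion.2 ⟨⟨x, hx⟩, hzO ⟨x, hx⟩⟩
  obtain ⟨δ₀, hδ₀, hleb⟩ := lebesgue_number_lemma_of_metric hK hOopen hcover
  refine ⟨min δ₀ ε, lt_min hδ₀ hε, min_le_right _ _, ?_⟩
  intro x hx y hy hxy
  obtain ⟨z, hz⟩ := hleb x hx
  refine ⟨O z ∩ K, inter_subset_right, hOconn z, ?_, ?_, ?_⟩
  · exact ⟨hz (mem_ball_self hδ₀), hx⟩
  · exact ⟨hz (by simpa [mem_ball, dist_comm] using hxy.trans_le (min_le_left _ _)), hy⟩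
  · intro w hw
    have h1 : dist w (z : ℂ) < ε/2 := mem_ball.1 (hOball z hw)
    have h2 : dist x (z : ℂ) < ε/2 :=
      mem_ball.1 (hOball z ⟨hz (mem_ball_self hδ₀), hx⟩)
    rw [mem_closedBall]
    calc dist w x ≤ dist w (z:ℂ) + dist (z:ℂ) x := dist_triangle _ _ _
      _ ≤ ε/2 + ε/2 := by rw [dist_comm (z:ℂ) x]; linarith
      _ = ε := by ring
  
/-- A finite δ-net inside a compact set. -/
lemma exists_net {K : Set ℂ} (hK : IsCompact K) {δ : ℝ} (hδ : 0 < δ) :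
    ∃ D : Finset ℂ, (∀ p ∈ D, p ∈ K) ∧ ∀ q ∈ K, ∃ p ∈ D, dist q p < δ := by
  obtain ⟨t, hts, htfin, hcov⟩ := finite_cover_balls_of_compact hK hδ
  refine ⟨htfin.toFinset, fun p hp => hts (htfin.mem_toFinset.1 hp), fun q hq => ?_⟩
  obtain ⟨p, hp, hqp⟩ := mem_iUnion₂.1 (hcov hq)
  exact ⟨p, htfin.mem_toFinset.2 hp, mem_ball.1 hqp⟩



/-- scales -/
def eps (n : ℕ) : ℝ := (1/2 : ℝ)^n

lemma eps_pos (n : ℕ) : 0 < eps n := by unfold eps; positivity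

/-- The invariant of stage `n`. -/
def Inv (K : Set ℂ) (dA : ℝ → ℝ) (n N : ℕ) (c : ℕ → ℂ) : Prop :=
  0 < N ∧ (∀ j ≤ N, c j ∈ K) ∧ (∀ j < N, dist (c j) (c (j+1)) < dA (eps n)) ∧
    ∀ q ∈ K, ∃ j < N, dist q (c j) < dA (eps n)

/-- Property of the modulus function `dA`. -/
def DAprop (K : Set ℂ) (dA : ℝ → ℝ) : Prop :=
  ∀ ε : ℝ, 0 < ε → 0 < dA ε ∧ dA ε ≤ ε ∧ ∀ x ∈ K, ∀ y ∈ K, dist x y < dA ε →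
    ∃ S, S ⊆ K ∧ IsPreconnected S ∧ x ∈ S ∧ y ∈ S ∧ S ⊆ closedBall x ε

lemma chain_visiting {K : Set ℂ} (hK : IsPreconnected K) {δ : ℝ} (hδ : 0 < δ)
    {x : ℂ} (hx : x ∈ K) (l : List ℂ) (hl : ∀ p ∈ l, p ∈ K) :
    ∃ n f, f 0 = x ∧ IsChainF δ K n f ∧ ∀ p ∈ l, ∃ j ≤ n, f j = p := by
  induction l with
  | nil =>
    exact ⟨0, fun _ => x, rfl, ⟨fun _ _ => hx, fun j hj => absurd hj (Nat.not_lt_zero j)⟩,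
      by simp⟩
  | cons p l ih =>
    obtain ⟨n, f, h0, hc, hvis⟩ := ih (fun q hq => hl q (List.mem_cons_of_mem _ hq))
    have hfn : f n ∈ K := hc.1 n le_rfl
    obtain ⟨m, g, g0, gm, hg⟩ :=
      reach_of_preconnected hK hδ hfn (hl p List.mem_cons_self)
    have hend : f n = g 0 := by rw [g0]
    refine ⟨n + m, cat n f g, by rw [cat_left hend (Nat.zero_le n), h0],
      cat_chain hc hg hend, ?_⟩
    intro q hq
    rcases List.mem_cons.1 hq with rfl | hq
    · exact ⟨n + m, le_rfl, by rw [cat_right]; exact gm⟩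
    · obtain ⟨j, hj, hfj⟩ := hvis q hq
      exact ⟨j, by omega, by rw [cat_left hend hj]; exact hfj⟩

section Step

variable {K : Set ℂ} {dA : ℝ → ℝ}

/-- loops at `c i` visiting all points of `l`. -/
lemma loops (hdA : DAprop K dA) {n : ℕ} {x : ℂ} (hxK : x ∈ K)
    (l : List ℂ) (hl : ∀ p ∈ l, p ∈ K ∧ dist p x < dA (eps n)) :
    ∃ m f, f 0 = x ∧ f m = x ∧
      IsChainF (dA (eps (n+1))) (K ∩ closedBall x (2 * eps n)) m f ∧
      ∀ p ∈ l, ∃ j ≤ m, f j = p := by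
  have hδ' : 0 < dA (eps (n+1)) := (hdA _ (eps_pos (n+1))).1
  have hxB : x ∈ K ∩ closedBall x (2 * eps n) := by
    refine ⟨hxK, ?_⟩
    simp only [mem_closedBall, dist_self]
    nlinarith [eps_pos n]
  induction l with
  | nil =>
    exact ⟨0, fun _ => x, rfl, rfl,
      ⟨fun _ _ => hxB, fun j hj => absurd hj (Nat.not_lt_zero j)⟩, by simp⟩
  | cons p l ih =>
    obtain ⟨m, f, h0, hm, hc, hvis⟩ := ih (fun q hq => hl q (List.mem_cons_of_mem _ hq))
    obtain ⟨hpK, hpd⟩ := hl p List.mem_cons_self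
    obtain ⟨S, hSK, hSconn, hxS, hpS, hSball⟩ :=
      (hdA _ (eps_pos n)).2.2 x hxK p hpK (by rw [dist_comm]; exact hpd)
    have hSB : S ⊆ K ∩ closedBall x (2 * eps n) := by
      intro w hw
      refine ⟨hSK hw, ?_⟩
      have := hSball hw
      rw [mem_closedBall] at this ⊢
      have h2 : eps n ≤ 2 * eps n := by have := eps_pos n; linarith
      exact this.trans h2
    obtain ⟨m1, g1, g10, g1m, hg1⟩ := reach_of_preconnected hSconn hδ' hxS hpS
    obtain ⟨m2, g2, g20, g2m, hg2⟩ := reach_of_preconnected hSconn hδ' hpS hxS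
    have hg1' := hg1.mono le_rfl hSB
    have hg2' := hg2.mono le_rfl hSB
    have hend2 : g1 m1 = g2 0 := by rw [g1m, g20]
    have hend1 : f m = (cat m1 g1 g2) 0 := by
      rw [cat_left hend2 (Nat.zero_le m1), hm, g10]
    refine ⟨m + (m1 + m2), cat m f (cat m1 g1 g2),
      by rw [cat_left hend1 (Nat.zero_le m), h0], ?_,
      cat_chain hc (cat_chain hg1' hg2' hend2) hend1, ?_⟩
    · rw [cat_right]
      have : m1 + m2 = m1 + m2 := rfl
      rw [show m1 + m2 = m1 + m2 from rfl, cat_right]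
      exact g2m
    · intro q hq
      rcases List.mem_cons.1 hq with rfl | hq
      · refine ⟨m + m1, by omega, ?_⟩
        rw [cat_right, cat_left hend2 le_rfl, g1m]
      · obtain ⟨j, hj, hfj⟩ := hvis q hq
        exact ⟨j, by omega, by rw [cat_left hend1 hj]; exact hfj⟩

/-- The core chain for segment `i`. -/
lemma core (hdA : DAprop K dA) {n N : ℕ} {c : ℕ → ℂ} (h : Inv K dA n N c)
    (D : Finset ℂ) (I : ℂ → ℕ)
    (hI : ∀ p ∈ D, I p < N ∧ dist p (c (I p)) < dA (eps n))
    (hDK : ∀ p ∈ D, p ∈ K) (i : ℕ) (hi : i < N) :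
    ∃ m g, 0 < m ∧ g 0 = c i ∧ g m = c (i+1) ∧
      IsChainF (dA (eps (n+1))) (K ∩ closedBall (c i) (2 * eps n)) m g ∧
      ∀ p ∈ D, I p = i → ∃ j < m, g j = p := by
  classical
  have hδ' : 0 < dA (eps (n+1)) := (hdA _ (eps_pos (n+1))).1
  set l := D.toList.filter (fun p => I p = i) with hldef
  have hlmem : ∀ p, p ∈ l ↔ p ∈ D ∧ I p = i := by
    intro p
    simp [hldef, List.mem_filter, Finset.mem_toList]
  obtain ⟨m, f, h0, hm, hc, hvis⟩ := loops hdA (h.2.1 i hi.le) l (fun p hp => by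
    obtain ⟨hpD, hpi⟩ := (hlmem p).1 hp
    exact ⟨hDK p hpD, by rw [← hpi]; exact (hI p hpD).2⟩)
  -- main chain from c i to c (i+1)
  obtain ⟨S, hSK, hSconn, hxS, hyS, hSball⟩ :=
    (hdA _ (eps_pos n)).2.2 (c i) (h.2.1 i hi.le) (c (i+1)) (h.2.1 (i+1) hi)
      (h.2.2.1 i hi)
  have hSB : S ⊆ K ∩ closedBall (c i) (2 * eps n) := by
    intro w hw
    refine ⟨hSK hw, ?_⟩
    have := hSball hw
    rw [mem_closedBall] at this ⊢
    have h2 : eps n ≤ 2 * eps n := by have := eps_pos n; linarith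
    exact this.trans h2
  obtain ⟨m3, g3, g30, g3m, hg3⟩ := reach_of_preconnected hSconn hδ' hxS hyS
  have hg3' := hg3.mono le_rfl hSB
  have hc1B : c (i+1) ∈ K ∩ closedBall (c i) (2 * eps n) := hSB hyS
  have hconst : IsChainF (dA (eps (n+1))) (K ∩ closedBall (c i) (2 * eps n)) 1
      (fun _ => c (i+1)) :=
    ⟨fun _ _ => hc1B, fun j hj => by simp [hδ']⟩
  have hend2 : g3 m3 = (fun _ => c (i+1)) 0 := by rw [g3m]
  have hend1 : f m = (cat m3 g3 (fun _ => c (i+1))) 0 := by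
    rw [cat_left hend2 (Nat.zero_le m3), hm, g30]
  refine ⟨m + (m3 + 1), cat m f (cat m3 g3 (fun _ => c (i+1))), by omega,
    by rw [cat_left hend1 (Nat.zero_le m), h0], ?_,
    cat_chain hc (cat_chain hg3' hconst hend2) hend1, ?_⟩
  · rw [cat_right, show m3 + 1 = m3 + 1 from rfl, cat_right]
  · intro p hp hpi
    obtain ⟨j, hj, hfj⟩ := hvis p ((hlmem p).2 ⟨hp, hpi⟩)
    exact ⟨j, by omega, by rw [cat_left hend1 hj]; exact hfj⟩

end Step



variable {K : Set ℂ} {dA : ℝ → ℝ}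

lemma step (hK : IsCompact K) (hdA : DAprop K dA) {n N : ℕ} {c : ℕ → ℂ}
    (h : Inv K dA n N c) :
    ∃ L, 0 < L ∧ ∃ c', Inv K dA (n+1) (N * L) c' ∧ (∀ i ≤ N, c' (L * i) = c i) ∧
      ∀ i < N, ∀ j, L * i ≤ j → j ≤ L * (i+1) → dist (c' j) (c i) ≤ 2 * eps n := by
  classical
  have hδ' : 0 < dA (eps (n+1)) := (hdA _ (eps_pos (n+1))).1
  obtain ⟨D, hDK, hDnet⟩ := exists_net hK hδ'
  have hIex : ∀ p : ℂ, ∃ ip : ℕ, p ∈ D → ip < N ∧ dist p (c ip) < dA (eps n) := by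
    intro p
    by_cases hp : p ∈ D
    · obtain ⟨j, hj, hjd⟩ := h.2.2.2 p (hDK p hp)
      exact ⟨j, fun _ => ⟨hj, hjd⟩⟩
    · exact ⟨0, fun hc => absurd hc hp⟩
  choose I hI using hIex
  have hI' : ∀ p ∈ D, I p < N ∧ dist p (c (I p)) < dA (eps n) := fun p hp => hI p hp
  have hcore := core hdA h D I hI' hDK
  choose! m g hm0 hg0 hgm hgc hgvis using hcore
  set L := (Finset.range N).sup m + 1 with hLdef
  have hLpos : 0 < L := Nat.succ_pos _
  have hmL : ∀ i < N, m i < L := by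
    intro i hi
    have : m i ≤ (Finset.range N).sup m := Finset.le_sup (Finset.mem_range.2 hi)
    omega
  -- the block for segment i
  set B : ℕ → ℕ → ℂ := fun i => cat (L - m i) (fun _ => c i) (g i) with hBdef
  have hB0 : ∀ i < N, B i 0 = c i := by
    intro i hi
    rw [hBdef]
    simp only
    rw [cat_left (by simp [hg0 i hi]) (Nat.zero_le _)]
  have hBL : ∀ i < N, B i L = c (i+1) := by
    intro i hi
    have e : (L - m i) + m i = L := by have := hmL i hi; omega
    have h2 := cat_right (n := L - m i) (f := fun _ => c i) (g := g i) (m i)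
    rw [e] at h2
    rw [hBdef]; simp only
    rw [h2, hgm i hi]
  have hBchain : ∀ i < N,
      IsChainF (dA (eps (n+1))) (K ∩ closedBall (c i) (2 * eps n)) L (B i) := by
    intro i hi
    have hciB : c i ∈ K ∩ closedBall (c i) (2 * eps n) :=
      ⟨h.2.1 i hi.le, by simp only [mem_closedBall, dist_self]; nlinarith [eps_pos n]⟩
    have hconst : IsChainF (dA (eps (n+1))) (K ∩ closedBall (c i) (2 * eps n))
        (L - m i) (fun _ => c i) :=
      ⟨fun _ _ => hciB, fun j hj => by simpa using hδ'⟩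
    have := cat_chain hconst (hgc i hi) (by simp [hg0 i hi])
    have hLe : (L - m i) + m i = L := by have := hmL i hi; omega
    rw [hLe] at this
    exact this
  have hBvis : ∀ i < N, ∀ p ∈ D, I p = i → ∃ j < L, B i j = p := by
    intro i hi p hp hpi
    obtain ⟨j, hj, hgj⟩ := hgvis i hi p hp hpi
    refine ⟨(L - m i) + j, by have := hmL i hi; omega, ?_⟩
    rw [hBdef]; simp only
    rw [cat_right]; exact hgj
  -- assembly
  have main : ∀ i, i ≤ N → ∃ F : ℕ → ℂ, (∀ i' ≤ i, F (L * i') = c i') ∧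
      (∀ j ≤ L * i, F j ∈ K) ∧
      (∀ j < L * i, dist (F j) (F (j+1)) < dA (eps (n+1))) ∧
      (∀ i' < i, ∀ j, L * i' ≤ j → j ≤ L * (i'+1) → dist (F j) (c i') ≤ 2 * eps n) ∧
      (∀ p ∈ D, I p < i → ∃ j < L * i, F j = p) := by
    intro i
    induction i with
    | zero =>
      intro _
      refine ⟨fun _ => c 0, ?_, ?_, ?_, ?_, ?_⟩
      · intro i' hi'
        have : i' = 0 := by omega
        simp [this]
      · intro j hj
        have : j = 0 := by omega
        exact h.2.1 0 (Nat.zero_le N)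
      · intro j hj; omega
      · intro i' hi'; omega
      · intro p _ hp; omega
    | succ i ih =>
      intro hi1
      have hiN : i < N := hi1
      obtain ⟨F, hFend, hFmem, hFdist, hFball, hFvis⟩ := ih (by omega)
      have hend : F (L * i) = B i 0 := by rw [hFend i le_rfl, hB0 i hiN]
      set F' : ℕ → ℂ := cat (L * i) F (B i) with hF'def
      have hF'lt : ∀ j ≤ L * i, F' j = F j := fun j hj => cat_left hend hj
      have hF'ge : ∀ j, F' (L * i + j) = B i j := fun j => cat_right j
      have hmul : L * (i + 1) = L * i + L := by ring
      refine ⟨F', ?_, ?_, ?_, ?_, ?_⟩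
      · intro i' hi'
        rcases Nat.lt_or_ge i' (i+1) with h' | h'
        · have hi'' : i' ≤ i := by omega
          rw [hF'lt _ (Nat.mul_le_mul_left L hi''), hFend i' hi'']
        · have : i' = i + 1 := by omega
          subst this
          rw [hmul, hF'ge L, hBL i hiN]
      · intro j hj
        rcases Nat.lt_or_ge j (L * i) with h' | h'
        · rw [hF'lt j h'.le]; exact hFmem j h'.le
        · obtain ⟨j', rfl⟩ : ∃ j', j = L * i + j' := ⟨j - L * i, by omega⟩
          rw [hF'ge]
          have hj' : j' ≤ L := by omega
          exact ((hBchain i hiN).1 j' hj').1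
      · intro j hj
        rcases Nat.lt_or_ge j (L * i) with h' | h'
        · rw [hF'lt j h'.le, hF'lt (j+1) (by omega)]
          exact hFdist j h'
        · obtain ⟨j', rfl⟩ : ∃ j', j = L * i + j' := ⟨j - L * i, by omega⟩
          have hj' : j' < L := by omega
          have e1 : L * i + j' + 1 = L * i + (j' + 1) := by omega
          rw [hF'ge, e1, hF'ge]
          exact (hBchain i hiN).2 j' hj'
      · intro i' hi' j hj1 hj2
        rcases Nat.lt_or_ge i' i with h' | h'
        · have : j ≤ L * i := le_trans hj2 (Nat.mul_le_mul_left L (by omega))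
          rw [hF'lt j this]
          exact hFball i' h' j hj1 hj2
        · have : i' = i := by omega
          subst this
          obtain ⟨j', rfl⟩ : ∃ j', j = L * i' + j' := ⟨j - L * i', by omega⟩
          rw [hF'ge]
          have hj' : j' ≤ L := by rw [hmul] at hj2; omega
          exact (((hBchain i' hiN).1 j' hj').2 : _)
      · intro p hp hpi
        rcases Nat.lt_or_ge (I p) i with h' | h'
        · obtain ⟨j, hj, hFj⟩ := hFvis p hp h'
          exact ⟨j, by rw [hmul]; omega, by rw [hF'lt j hj.le]; exact hFj⟩
        · have : I p = i := by omega
          obtain ⟨j, hj, hBj⟩ := hBvis i hiN p hp this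
          exact ⟨L * i + j, by rw [hmul]; omega, by rw [hF'ge]; exact hBj⟩
  obtain ⟨F, hFend, hFmem, hFdist, hFball, hFvis⟩ := main N le_rfl
  refine ⟨L, hLpos, F, ⟨?_, ?_, ?_, ?_⟩, hFend, ?_⟩
  · exact Nat.mul_pos h.1 hLpos
  · intro j hj; exact hFmem j (by rw [Nat.mul_comm]; exact hj)
  · intro j hj; exact hFdist j (by rw [Nat.mul_comm] at hj; exact hj)
  · intro q hq
    obtain ⟨p, hp, hqp⟩ := hDnet q hq
    obtain ⟨j, hj, hFj⟩ := hFvis p hp (hI' p hp).1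
    exact ⟨j, by rw [Nat.mul_comm]; exact hj, by rw [hFj]; exact hqp⟩
  · intro i hi j hj1 hj2
    exact hFball i hi j hj1 hj2



variable {K : Set ℂ} {dA : ℝ → ℝ}

/-- Link between consecutive stages. -/
def Link (n : ℕ) (d d' : ℕ × (ℕ → ℂ)) : Prop :=
  ∃ L, 0 < L ∧ d'.1 = d.1 * L ∧ (∀ i ≤ d.1, d'.2 (L * i) = d.2 i) ∧
    ∀ i < d.1, ∀ j, L * i ≤ j → j ≤ L * (i+1) → dist (d'.2 j) (d.2 i) ≤ 2 * eps n

lemma step2 (hK : IsCompact K) (hdA : DAprop K dA) {n : ℕ} {d : ℕ × (ℕ → ℂ)}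
    (h : Inv K dA n d.1 d.2) :
    ∃ d' : ℕ × (ℕ → ℂ), Inv K dA (n+1) d'.1 d'.2 ∧ Link n d d' := by
  obtain ⟨L, hL, c', hinv, hend, hball⟩ := step hK hdA h
  exact ⟨(d.1 * L, c'), hinv, L, hL, rfl, hend, hball⟩

def seqAux (hK : IsCompact K) (hdA : DAprop K dA)
    (d₀ : {d : ℕ × (ℕ → ℂ) // Inv K dA 0 d.1 d.2}) :
    ∀ n : ℕ, {d : ℕ × (ℕ → ℂ) // Inv K dA n d.1 d.2}
  | 0 => d₀
  | (n+1) => ⟨Classical.choose (step2 hK hdA (seqAux hK hdA d₀ n).2),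
      (Classical.choose_spec (step2 hK hdA (seqAux hK hdA d₀ n).2)).1⟩

lemma seqAux_link (hK : IsCompact K) (hdA : DAprop K dA)
    (d₀ : {d : ℕ × (ℕ → ℂ) // Inv K dA 0 d.1 d.2}) (n : ℕ) :
    Link n (seqAux hK hdA d₀ n).1 (seqAux hK hdA d₀ (n+1)).1 :=
  (Classical.choose_spec (step2 hK hdA (seqAux hK hdA d₀ n).2)).2

/-- index of `t` in a uniform partition with `N` pieces. -/
def idx (N : ℕ) (t : ℝ) : ℕ := min ⌊(N:ℝ) * t⌋₊ N

lemma idx_le (N : ℕ) (t : ℝ) : idx N t ≤ N := min_le_right _ _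

lemma idx_one {N : ℕ} (t : ℝ) (ht : 1 ≤ t) : idx N t = N := by
  unfold idx
  have : (N : ℝ) ≤ (N:ℝ) * t := le_mul_of_one_le_right (Nat.cast_nonneg N) ht
  have h2 : N ≤ ⌊(N:ℝ) * t⌋₊ := Nat.le_floor (by exact_mod_cast this)
  omega

lemma idx_lt {N : ℕ} (hN : 0 < N) {t : ℝ} (ht1 : t < 1) : idx N t < N := by
  unfold idx
  have : (N:ℝ) * t < N := by
    have hN' : (0:ℝ) < N := by exact_mod_cast hN
    nlinarith
  have h2 : ⌊(N:ℝ) * t⌋₊ < N := by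
    rcases le_or_gt ((N:ℝ)*t) 0 with h | h
    · have : ⌊(N:ℝ) * t⌋₊ = 0 := Nat.floor_of_nonpos h
      omega
    · exact Nat.floor_lt (le_of_lt h) |>.2 this
  omega

lemma idx_nest {N L : ℕ} (hN : 0 < N) (hL : 0 < L) {t : ℝ} (ht0 : 0 ≤ t) (ht1 : t < 1) :
    L * idx N t ≤ idx (N * L) t ∧ idx (N * L) t ≤ L * (idx N t + 1) := by
  have hNt : 0 ≤ (N:ℝ) * t := mul_nonneg (Nat.cast_nonneg N) ht0
  have hiN : idx N t = ⌊(N:ℝ) * t⌋₊ := by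
    have := idx_lt hN ht1
    unfold idx at this ⊢
    omega
  have hiNL : idx (N * L) t = ⌊((N*L : ℕ):ℝ) * t⌋₊ := by
    have := idx_lt (Nat.mul_pos hN hL) ht1
    unfold idx at this ⊢
    omega
  have hfl : (⌊(N:ℝ) * t⌋₊ : ℝ) ≤ (N:ℝ) * t := Nat.floor_le hNt
  have hfu : (N:ℝ) * t < ⌊(N:ℝ) * t⌋₊ + 1 := Nat.lt_floor_add_one _
  constructor
  · rw [hiN, hiNL]
    apply Nat.le_floor
    push_cast
    calc (L:ℝ) * ⌊(N:ℝ) * t⌋₊ ≤ (L:ℝ) * ((N:ℝ) * t) := by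
          apply mul_le_mul_of_nonneg_left hfl (Nat.cast_nonneg L)
      _ = (N:ℝ) * (L:ℝ) * t := by ring
  · rw [hiN, hiNL]
    have : ((N*L : ℕ):ℝ) * t < (L:ℝ) * (⌊(N:ℝ) * t⌋₊ + 1) := by
      push_cast
      calc (N:ℝ) * (L:ℝ) * t = (L:ℝ) * ((N:ℝ) * t) := by ring
        _ < (L:ℝ) * (⌊(N:ℝ) * t⌋₊ + 1) := by
            apply mul_lt_mul_of_pos_left hfu (by exact_mod_cast hL)
    have h2 := Nat.floor_lt (mul_nonneg (Nat.cast_nonneg _) ht0) |>.2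
      (by exact_mod_cast this : ((N*L:ℕ):ℝ) * t < ((L * (⌊(N:ℝ)*t⌋₊ + 1) : ℕ) : ℝ))
    omega

/-- clamp to [0,1] -/
def clamp (t : ℝ) : ℝ := max 0 (min 1 t)

lemma clamp_mem (t : ℝ) : clamp t ∈ Icc (0:ℝ) 1 := by
  constructor
  · exact le_max_left _ _
  · unfold clamp
    simp only [max_le_iff]
    exact ⟨zero_le_one, min_le_left _ _⟩

lemma clamp_eq {t : ℝ} (ht : t ∈ Icc (0:ℝ) 1) : clamp t = t := by
  unfold clamp
  rw [min_eq_right ht.2, max_eq_right ht.1]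

lemma clamp_lipschitz (s t : ℝ) : |clamp s - clamp t| ≤ |s - t| := by
  unfold clamp
  rw [max_comm 0 (min 1 s), max_comm 0 (min 1 t)]
  refine (abs_max_sub_max_le_abs _ _ _).trans ?_
  refine (abs_min_sub_min_le_max 1 s 1 t).trans ?_
  simp



variable {K : Set ℂ} {dA : ℝ → ℝ}

lemma eps_succ (n : ℕ) : eps (n+1) = eps n / 2 := by
  unfold eps; rw [pow_succ]; ring

theorem exists_surj (hK : IsCompact K) (hdA : DAprop K dA)
    (sq : ℕ → ℕ × (ℕ → ℂ))
    (hinv0 : ∀ n, Inv K dA n (sq n).1 (sq n).2)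
    (hlink0 : ∀ n, Link n (sq n) (sq (n+1))) :
    ∃ f : ℝ → ℂ, Continuous f ∧ K = f '' Icc 0 1 := by
  set Nn : ℕ → ℕ := fun n => (sq n).1 with hNn
  set cn : ℕ → ℕ → ℂ := fun n => (sq n).2 with hcn
  have hinv : ∀ n, Inv K dA n (Nn n) (cn n) := fun n => hinv0 n
  have hlink : ∀ n, Link n (Nn n, cn n) (Nn (n+1), cn (n+1)) := fun n => hlink0 n
  have hNpos : ∀ n, 0 < Nn n := fun n => (hinv n).1
  have hdAle : ∀ n, dA (eps n) ≤ eps n := fun n => (hdA _ (eps_pos n)).2.1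
  set g : ℕ → ℝ → ℂ := fun n t => cn n (idx (Nn n) (clamp t)) with hg
  -- successive distance
  have hg_succ : ∀ n t, dist (g (n+1) t) (g n t) ≤ 2 * eps n := by
    intro n t
    obtain ⟨L, hL, hNeq, hend, hball⟩ := hlink n
    simp only at hNeq hend hball
    have hu := clamp_mem t
    rcases lt_or_ge (clamp t) 1 with h1 | h1
    · have hi := idx_lt (hNpos n) h1
      have hnest := idx_nest (hNpos n) hL hu.1 h1
      have : g (n+1) t = cn (n+1) (idx (Nn n * L) (clamp t)) := by
        rw [hg]; simp only; rw [hNeq]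
      rw [this]
      exact hball _ hi _ hnest.1 hnest.2
    · have e1 : idx (Nn n) (clamp t) = Nn n := idx_one _ h1
      have e2 : idx (Nn (n+1)) (clamp t) = Nn (n+1) := idx_one _ h1
      have : g (n+1) t = cn n (Nn n) := by
        rw [hg]; simp only; rw [e2, hNeq, Nat.mul_comm, hend (Nn n) le_rfl]
      rw [this, hg]; simp only [e1, dist_self]
      nlinarith [eps_pos n]
  have hg_ge : ∀ t n k, dist (g (n+k) t) (g n t) ≤ 4 * eps n - 4 * eps (n+k) := by
    intro t n k
    induction k with
    | zero => simp
    | succ k ih =>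
      calc dist (g (n+(k+1)) t) (g n t)
          ≤ dist (g (n+k+1) t) (g (n+k) t) + dist (g (n+k) t) (g n t) := by
            rw [show n+(k+1) = n+k+1 from rfl]; exact dist_triangle _ _ _
        _ ≤ 2 * eps (n+k) + (4 * eps n - 4 * eps (n+k)) := by
            gcongr
            exact hg_succ (n+k) t
        _ = 4 * eps n - 4 * eps (n+k+1) := by
            rw [eps_succ (n+k)]; ring
  have hcauchy : ∀ t, CauchySeq (fun n => g n t) := by
    intro t
    apply cauchySeq_of_le_geometric (1/2 : ℝ) 2 (by norm_num)
    intro n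
    rw [dist_comm]
    calc dist (g (n+1) t) (g n t) ≤ 2 * eps n := hg_succ n t
      _ = 2 * (1/2)^n := by unfold eps; ring
  choose fl hfl using fun t => cauchySeq_tendsto_of_complete (hcauchy t)
  have hdistfg : ∀ t n, dist (fl t) (g n t) ≤ 4 * eps n := by
    intro t n
    have htd : Tendsto (fun m => dist (g m t) (g n t)) atTop
        (𝓝 (dist (fl t) (g n t))) := (hfl t).dist tendsto_const_nhds
    refine le_of_tendsto htd ?_
    rw [eventually_atTop]
    refine ⟨n, fun m hm => ?_⟩
    obtain ⟨k, rfl⟩ := Nat.exists_eq_add_of_le hm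
    calc dist (g (n+k) t) (g n t) ≤ 4 * eps n - 4 * eps (n+k) := hg_ge t n k
      _ ≤ 4 * eps n := by nlinarith [eps_pos (n+k)]
  have hmem : ∀ t, fl t ∈ K := by
    intro t
    refine hK.isClosed.mem_of_tendsto (hfl t) (Eventually.of_forall fun n => ?_)
    exact (hinv n).2.1 _ (idx_le _ _)
  -- modulus of continuity
  have floor_close : ∀ x y : ℝ, 0 ≤ x → 0 ≤ y → |x - y| < 1 → ⌊x⌋₊ ≤ ⌊y⌋₊ + 1 := by
    intro x y hx hy hxy
    have h1 : x < y + 1 := by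
      have := abs_lt.1 hxy
      linarith [this.2]
    have h2 : y < ⌊y⌋₊ + 1 := Nat.lt_floor_add_one y
    have h3 : x < (⌊y⌋₊ : ℝ) + 2 := by linarith
    have := Nat.floor_le_floor (le_of_lt h3)
    have h4 : ⌊(⌊y⌋₊ : ℝ) + 2⌋₊ = ⌊y⌋₊ + 2 := by
      rw [show ((⌊y⌋₊ : ℝ) + 2) = ((⌊y⌋₊ + 2 : ℕ) : ℝ) by push_cast; ring, Nat.floor_natCast]
    have h5 : ⌊x⌋₊ ≤ ⌊y⌋₊ + 2 := h4 ▸ this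
    rcases Nat.lt_or_ge ⌊x⌋₊ (⌊y⌋₊ + 2) with h | h
    · omega
    · exfalso
      have he : ⌊x⌋₊ = ⌊y⌋₊ + 2 := by omega
      have : ((⌊y⌋₊ + 2 : ℕ) : ℝ) ≤ x := he ▸ Nat.floor_le hx
      push_cast at this
      linarith
  have hgst : ∀ n s t, |s - t| * (Nn n : ℝ) < 1 → dist (g n s) (g n t) ≤ eps n := by
    intro n s t hst
    set a := clamp s with ha
    set b := clamp t with hb
    have hab : |a - b| * (Nn n : ℝ) < 1 := by
      have h1 := clamp_lipschitz s t
      have h2 : (0:ℝ) ≤ Nn n := Nat.cast_nonneg _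
      calc |a - b| * (Nn n : ℝ) ≤ |s - t| * (Nn n : ℝ) :=
            mul_le_mul_of_nonneg_right h1 h2
        _ < 1 := hst
    have hNa : 0 ≤ (Nn n : ℝ) * a := mul_nonneg (Nat.cast_nonneg _) (clamp_mem s).1
    have hNb : 0 ≤ (Nn n : ℝ) * b := mul_nonneg (Nat.cast_nonneg _) (clamp_mem t).1
    have hdiff : |(Nn n : ℝ) * a - (Nn n : ℝ) * b| < 1 := by
      rw [← mul_sub, abs_mul, Nat.abs_cast, mul_comm]
      exact hab
    have hfl1 : ⌊(Nn n : ℝ) * a⌋₊ ≤ ⌊(Nn n : ℝ) * b⌋₊ + 1 := floor_close _ _ hNa hNb hdiff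
    have hfl2 : ⌊(Nn n : ℝ) * b⌋₊ ≤ ⌊(Nn n : ℝ) * a⌋₊ + 1 := by
      refine floor_close _ _ hNb hNa ?_
      rw [abs_sub_comm]; exact hdiff
    have key : ∀ i i', i ≤ Nn n → i' ≤ Nn n → i' = i + 1 →
        dist (cn n i) (cn n i') ≤ eps n := by
      intro i i' hi hi' he
      subst he
      exact le_of_lt (lt_of_lt_of_le ((hinv n).2.2.1 i hi') (hdAle n))
    set i1 := idx (Nn n) a
    set i2 := idx (Nn n) b
    have hi1 : i1 ≤ Nn n := idx_le _ _
    have hi2 : i2 ≤ Nn n := idx_le _ _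
    have e1 : i1 = min ⌊(Nn n : ℝ) * a⌋₊ (Nn n) := rfl
    have e2 : i2 = min ⌊(Nn n : ℝ) * b⌋₊ (Nn n) := rfl
    have hclose : i1 ≤ i2 + 1 ∧ i2 ≤ i1 + 1 := by
      constructor <;> · rw [e1, e2]; omega
    have hgs : g n s = cn n i1 := rfl
    have hgt' : g n t = cn n i2 := rfl
    rw [hgs, hgt']
    rcases Nat.lt_trichotomy i1 i2 with h | h | h
    · have : i2 = i1 + 1 := by omega
      exact key i1 i2 hi1 hi2 this
    · rw [h, dist_self]; exact le_of_lt (eps_pos n)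
    · have : i1 = i2 + 1 := by omega
      rw [dist_comm]
      exact key i2 i1 hi2 hi1 this
  have hfst : ∀ n s t, |s - t| * (Nn n : ℝ) < 1 → dist (fl s) (fl t) ≤ 9 * eps n := by
    intro n s t hst
    calc dist (fl s) (fl t) ≤ dist (fl s) (g n s) + dist (g n s) (g n t)
          + dist (g n t) (fl t) := dist_triangle4 _ _ _ _
      _ ≤ 4 * eps n + eps n + 4 * eps n := by
          gcongr
          · exact hdistfg s n
          · exact hgst n s t hst
          · rw [dist_comm]; exact hdistfg t n
      _ = 9 * eps n := by ring
  have hepslim : Tendsto eps atTop (𝓝 0) := by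
    have : Tendsto (fun n : ℕ => (1/2 : ℝ)^n) atTop (𝓝 0) :=
      tendsto_pow_atTop_nhds_zero_of_lt_one (by norm_num) (by norm_num)
    exact this
  have hexn : ∀ C : ℝ, 0 < C → ∀ ε : ℝ, 0 < ε → ∃ n, C * eps n < ε := by
    intro C hC ε hε
    have h9 : Tendsto (fun n => C * eps n) atTop (𝓝 (C * 0)) := hepslim.const_mul C
    rw [mul_zero] at h9
    exact (h9.eventually_lt_const hε).exists
  have hcont : Continuous fl := by
    rw [Metric.continuous_iff]
    intro x ε hε
    obtain ⟨n, hn⟩ := hexn 9 (by norm_num) ε hε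
    refine ⟨1 / (Nn n + 1), by positivity, fun y hy => ?_⟩
    have hdy : |y - x| * (Nn n : ℝ) < 1 := by
      rw [Real.dist_eq] at hy
      have h1 : |y - x| * (Nn n : ℝ) ≤ |y - x| * (Nn n + 1) := by
        have := abs_nonneg (y - x)
        nlinarith
      have h2 : |y - x| * ((Nn n : ℝ) + 1) < 1 := by
        rw [div_eq_inv_mul, mul_one] at hy
        have hpos : (0:ℝ) < (Nn n : ℝ) + 1 := by positivity
        calc |y - x| * ((Nn n : ℝ) + 1) < ((Nn n : ℝ) + 1)⁻¹ * ((Nn n : ℝ) + 1) := by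
              exact mul_lt_mul_of_pos_right hy hpos
          _ = 1 := inv_mul_cancel₀ (ne_of_gt hpos)
      linarith
    calc dist (fl y) (fl x) ≤ 9 * eps n := hfst n y x hdy
      _ < ε := hn
  refine ⟨fl, hcont, ?_⟩
  apply Subset.antisymm
  · intro q hq
    have himc : IsCompact (fl '' Icc 0 1) := isCompact_Icc.image hcont
    rw [← himc.isClosed.closure_eq]
    rw [Metric.mem_closure_iff]
    intro ε hε
    obtain ⟨n, hn⟩ := hexn 5 (by norm_num) ε hε
    obtain ⟨j, hj, hjd⟩ := (hinv n).2.2.2 q hq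
    set t : ℝ := (j : ℝ) / (Nn n) with htdef
    have hNr : (0:ℝ) < (Nn n : ℝ) := by exact_mod_cast hNpos n
    have htIcc : t ∈ Icc (0:ℝ) 1 := by
      constructor
      · positivity
      · rw [htdef, div_le_one hNr]
        exact_mod_cast hj.le
    have hgt : g n t = cn n j := by
      rw [hg]; simp only
      rw [clamp_eq htIcc]
      congr 1
      unfold idx
      rw [htdef, mul_div_cancel₀ _ (ne_of_gt hNr), Nat.floor_natCast]
      omega
    refine ⟨fl t, mem_image_of_mem fl htIcc, ?_⟩
    calc dist q (fl t) ≤ dist q (g n t) + dist (g n t) (fl t) := dist_triangle _ _ _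
      _ ≤ dA (eps n) + 4 * eps n := by
          gcongr
          · rw [hgt]; exact hjd.le
          · rw [dist_comm]; exact hdistfg t n
      _ ≤ eps n + 4 * eps n := by linarith [hdAle n]
      _ = 5 * eps n := by ring
      _ < ε := hn
  · rintro _ ⟨t, _, rfl⟩
    exact hmem t


/-- Existence of `dA`. -/
lemma exists_dA {K : Set ℂ} (hK : IsCompact K) (hLC : LocallyConnectedSpace K) :
    ∃ dA : ℝ → ℝ, DAprop K dA := by
  have h : ∀ ε : ℝ, ∃ δ : ℝ, 0 < ε → (0 < δ ∧ δ ≤ ε ∧ ∀ x ∈ K, ∀ y ∈ K, dist x y < δ →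
      ∃ S, S ⊆ K ∧ IsPreconnected S ∧ x ∈ S ∧ y ∈ S ∧ S ⊆ closedBall x ε) := by
    intro ε
    by_cases hε : 0 < ε
    · obtain ⟨δ, h1, h2, h3⟩ := unif_loc_conn hK hLC hε
      exact ⟨δ, fun _ => ⟨h1, h2, h3⟩⟩
    · exact ⟨1, fun h => absurd h hε⟩
  choose dA hdA using h
  exact ⟨dA, fun ε hε => hdA ε hε⟩

/-- The initial chain. -/
lemma init_inv {K : Set ℂ} {dA : ℝ → ℝ} (hK : IsCompact K) (hconn : IsPreconnected K)
    (hne : K.Nonempty) (hdA : DAprop K dA) : ∃ N c, Inv K dA 0 N c := by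
  obtain ⟨x₀, hx₀⟩ := hne
  have hδ : 0 < dA (eps 0) := (hdA _ (eps_pos 0)).1
  obtain ⟨D, hDK, hDnet⟩ := exists_net hK hδ
  obtain ⟨n, f, h0, hc, hvis⟩ := chain_visiting hconn hδ hx₀ D.toList
    (fun p hp => hDK p (Finset.mem_toList.1 hp))
  refine ⟨n + 1, fun j => f (min j n), by omega, ?_, ?_, ?_⟩
  · intro j hj
    exact hc.1 _ (min_le_right _ _)
  · intro j hj
    show dist (f (min j n)) (f (min (j+1) n)) < dA (eps 0)
    rcases Nat.lt_or_ge j n with h | h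
    · have e1 : min j n = j := by omega
      have e2 : min (j+1) n = j+1 := by omega
      rw [e1, e2]
      exact hc.2 j h
    · have e1 : min j n = n := by omega
      have e2 : min (j+1) n = n := by omega
      rw [e1, e2, dist_self]
      exact hδ
  · intro q hq
    obtain ⟨p, hp, hqp⟩ := hDnet q hq
    obtain ⟨j, hj, hfj⟩ := hvis p (Finset.mem_toList.2 hp)
    refine ⟨j, by omega, ?_⟩
    show dist q (f (min j n)) < dA (eps 0)
    have : min j n = j := by omega
    rw [this, hfj]
    exact hqp

/-- Hahn–Mazurkiewicz, hard direction, for subsets of `ℂ`. -/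
theorem peano {K : Set ℂ} (hK : IsCompact K) (hconn : IsPreconnected K) (hne : K.Nonempty)
    (hLC : LocallyConnectedSpace K) : ∃ f : ℝ → ℂ, Continuous f ∧ K = f '' Icc 0 1 := by
  obtain ⟨dA, hdA⟩ := exists_dA hK hLC
  obtain ⟨N₀, c₀, hinv₀⟩ := init_inv hK hconn hne hdA
  set d₀ : {d : ℕ × (ℕ → ℂ) // Inv K dA 0 d.1 d.2} := ⟨(N₀, c₀), hinv₀⟩ with hd₀
  exact exists_surj hK hdA (fun n => (seqAux hK hdA d₀ n).1)
    (fun n => (seqAux hK hdA d₀ n).2) (fun n => seqAux_link hK hdA d₀ n)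



/-- Local connectedness descends along quotient maps. -/
lemma locallyConnected_of_quotient {A B : Type*} [TopologicalSpace A] [TopologicalSpace B]
    [LocallyConnectedSpace A] {q : A → B} (hq : IsQuotientMap q) :
    LocallyConnectedSpace B := by
  rw [locallyConnectedSpace_iff_connectedComponentIn_open]
  intro U hU x hxU
  rw [← hq.isOpen_preimage]
  have key : ∀ z ∈ q ⁻¹' (connectedComponentIn U x),
      connectedComponentIn (q ⁻¹' U) z ⊆ q ⁻¹' (connectedComponentIn U x) := by
    intro z hz w hw
    have hzU : z ∈ q ⁻¹' U := connectedComponentIn_subset U x hz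
    have h1 : IsPreconnected (connectedComponentIn (q ⁻¹' U) z) :=
      isPreconnected_connectedComponentIn
    have h2 : q '' connectedComponentIn (q ⁻¹' U) z ⊆ U := by
      rintro _ ⟨y, hy, rfl⟩
      exact connectedComponentIn_subset (q ⁻¹' U) z hy
    have h3 : q z ∈ q '' connectedComponentIn (q ⁻¹' U) z :=
      mem_image_of_mem q (mem_connectedComponentIn hzU)
    have h4 : q '' connectedComponentIn (q ⁻¹' U) z ⊆ connectedComponentIn U (q z) :=
      (h1.image q hq.continuous.continuousOn).subset_connectedComponentIn h3 h2
    have h5 : connectedComponentIn U x = connectedComponentIn U (q z) :=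
      connectedComponentIn_eq hz
    show q w ∈ connectedComponentIn U x
    rw [h5]
    exact h4 (mem_image_of_mem q hw)
  have heq : q ⁻¹' (connectedComponentIn U x) =
      ⋃ z ∈ q ⁻¹' (connectedComponentIn U x), connectedComponentIn (q ⁻¹' U) z := by
    apply Subset.antisymm
    · intro z hz
      refine mem_biUnion hz (mem_connectedComponentIn ?_)
      exact connectedComponentIn_subset U x hz
    · intro w hw
      obtain ⟨z, hz, hw'⟩ := mem_iUnion₂.1 hw
      exact key z hz hw'
  rw [heq]
  exact isOpen_biUnion fun z _ => (hU.preimage hq.continuous).connectedComponentIn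

/-- `Icc 0 1` in `ℝ` is locally connected. -/
lemma locallyConnected_Icc : LocallyConnectedSpace (Icc (0:ℝ) 1) := by
  rw [locallyConnectedSpace_iff_connected_subsets]
  intro x U hU
  rw [nhds_induced, Filter.mem_comap] at hU
  obtain ⟨W, hW, hWU⟩ := hU
  obtain ⟨ε, hε, hball⟩ := Metric.mem_nhds_iff.1 hW
  refine ⟨Subtype.val ⁻¹' (ball (x : ℝ) ε), ?_, ?_, ?_⟩
  · exact continuous_subtype_val.continuousAt.preimage_mem_nhds (ball_mem_nhds _ hε)
  · rw [← Topology.IsInducing.subtypeVal.isPreconnected_image]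
    rw [Subtype.image_preimage_coe]
    exact ((convex_Icc (0:ℝ) 1).inter (convex_ball _ _)).isPreconnected
  · exact fun t ht => hWU (hball ht)

/-- Locally connected for the image set. -/
lemma locallyConnected_image {X : Set ℂ} {f : ℝ → ℂ} (hf : ContinuousOn f (Icc 0 1))
    (hXf : X = f '' Icc 0 1) : LocallyConnectedSpace X := by
  have : CompactSpace (Icc (0:ℝ) 1) := isCompact_iff_compactSpace.1 isCompact_Icc
  have : LocallyConnectedSpace (Icc (0:ℝ) 1) := locallyConnected_Icc
  set q : Icc (0:ℝ) 1 → X := fun t => ⟨f t, by rw [hXf]; exact mem_image_of_mem f t.2⟩ with hq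
  have hqc : Continuous q := Continuous.subtype_mk hf.restrict _
  have hqs : Function.Surjective q := by
    rintro ⟨z, hz⟩
    rw [hXf] at hz
    obtain ⟨t, ht, hft⟩ := hz
    exact ⟨⟨t, ht⟩, Subtype.ext hft⟩
  exact locallyConnected_of_quotient (IsQuotientMap.of_surjective_continuous hqs hqc)



/-- Direction (2) → (1). -/
lemma two_to_one {X : Set ℂ} (h0 : (0:ℂ) ∈ X) {α : ℝ}
    (hα : (fun z => 2 * (α : ℂ) - (starRingEnd ℂ) z) '' X = X)
    {f : ℝ → ℂ} (hf : ContinuousOn f (Icc 0 1)) (hXf : X = f '' Icc 0 1) :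
    ∃ F : ℝ → ℂ, memF0 F ∧ X = F '' Icc 0 1 := by
  have hσX : ∀ z ∈ X, 2 * (α : ℂ) - (starRingEnd ℂ) z ∈ X := by
    intro z hz
    rw [← hα]; exact mem_image_of_mem _ hz
  -- find p ∈ X with p.re = α
  have hconnX : IsPreconnected X := by
    rw [hXf]; exact isPreconnected_Icc.image f hf
  have hA : IsPreconnected (Complex.re '' X) :=
    hconnX.image Complex.re Complex.continuous_re.continuousOn
  have h2α : (2*α : ℝ) ∈ Complex.re '' X := by
    have := hσX 0 h0
    simp only [map_zero, sub_zero] at this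
    refine ⟨2 * (α:ℂ), this, ?_⟩
    simp [Complex.ofReal_mul]
  have h0A : (0:ℝ) ∈ Complex.re '' X := ⟨0, h0, rfl⟩
  have hαA : α ∈ Complex.re '' X := by
    have hoc : (Complex.re '' X).OrdConnected := hA.ordConnected
    rcases le_total (0:ℝ) α with h | h
    · exact hoc.out h0A h2α ⟨by linarith, by linarith⟩
    · exact hoc.out h2α h0A ⟨by linarith, by linarith⟩
  obtain ⟨p, hpX, hpre⟩ := hαA
  -- get preimages
  obtain ⟨a, ha, hfa⟩ : ∃ a ∈ Icc (0:ℝ) 1, f a = 0 := by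
    have := h0; rw [hXf] at this; obtain ⟨a, ha, hfa⟩ := this; exact ⟨a, ha, hfa⟩
  obtain ⟨b, hb, hfb⟩ : ∃ b ∈ Icc (0:ℝ) 1, f b = p := by
    have := hpX; rw [hXf] at this; obtain ⟨b, hb, hfb⟩ := this; exact ⟨b, hb, hfb⟩
  -- the three paths
  have hmem1 : ∀ s : unitInterval, a * (1 - (s:ℝ)) ∈ Icc (0:ℝ) 1 := by
    intro s
    obtain ⟨hs0, hs1⟩ := s.2
    constructor
    · nlinarith [ha.1, ha.2]
    · nlinarith [ha.1, ha.2]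
  have hmem3 : ∀ s : unitInterval, 1 + (s:ℝ) * (b - 1) ∈ Icc (0:ℝ) 1 := by
    intro s
    obtain ⟨hs0, hs1⟩ := s.2
    constructor
    · nlinarith [hb.1, hb.2]
    · nlinarith [hb.1, hb.2]
  have hin : ∀ t ∈ Icc (0:ℝ) 1, f t ∈ X := by
    intro t ht; rw [hXf]; exact mem_image_of_mem f ht
  set x0 : X := ⟨0, h0⟩ with hx0
  set xf0 : X := ⟨f 0, hin 0 (by norm_num)⟩
  set xf1 : X := ⟨f 1, hin 1 (by norm_num)⟩
  set xp : X := ⟨p, hpX⟩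
  set γ1 : Path x0 xf0 :=
    { toFun := fun s => ⟨f (a * (1 - (s:ℝ))), hin _ (hmem1 s)⟩
      continuous_toFun := by
        apply Continuous.subtype_mk
        apply hf.comp_continuous
        · exact (continuous_const.mul (continuous_const.sub continuous_subtype_val))
        · exact hmem1
      source' := by
        apply Subtype.ext
        simp [hfa, x0]
      target' := by
        apply Subtype.ext
        simp [xf0] } with hγ1
  set γ2 : Path xf0 xf1 :=
    { toFun := fun s => ⟨f s, hin _ s.2⟩
      continuous_toFun := by
        apply Continuous.subtype_mk
        exact hf.comp_continuous continuous_subtype_val (fun s => s.2)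
      source' := by apply Subtype.ext; simp [xf0]
      target' := by apply Subtype.ext; simp [xf1] } with hγ2
  set γ3 : Path xf1 xp :=
    { toFun := fun s => ⟨f (1 + (s:ℝ) * (b - 1)), hin _ (hmem3 s)⟩
      continuous_toFun := by
        apply Continuous.subtype_mk
        apply hf.comp_continuous
        · exact (continuous_const.add (continuous_subtype_val.mul continuous_const))
        · exact hmem3
      source' := by apply Subtype.ext; simp [xf1]
      target' := by apply Subtype.ext; simp [hfb, xp] } with hγ3
  set γ : Path x0 xp := (γ1.trans γ2).trans γ3 with hγ
  set G : ℝ → ℂ := fun s => (γ.extend s : ℂ) with hG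
  have hGcont : Continuous G := continuous_subtype_val.comp γ.continuous_extend
  have hG0 : G 0 = 0 := by rw [hG]; simp [x0]
  have hG1 : G 1 = p := by rw [hG]; simp [xp]
  have hGX : ∀ s, G s ∈ X := fun s => (γ.extend s).2
  have hGsurj : ∀ x ∈ X, ∃ s ∈ Icc (0:ℝ) 1, G s = x := by
    intro x hx
    rw [hXf] at hx
    obtain ⟨t, ht, hft⟩ := hx
    have : γ2 ⟨t, ht⟩ ∈ range γ := by
      rw [hγ, Path.trans_range, Path.trans_range]
      exact Or.inl (Or.inr (mem_range_self _))
    obtain ⟨s, hs⟩ := this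
    refine ⟨(s:ℝ), s.2, ?_⟩
    show (γ.extend (s:ℝ) : ℂ) = x
    rw [γ.extend_extends' s, hs]
    exact hft
  -- the symmetrized function
  have hpconj : 2 * (α:ℂ) - (starRingEnd ℂ) p = p := by
    apply Complex.ext
    · simp [hpre]; ring
    · simp
  set F : ℝ → ℂ := fun t => if t ≤ 1/2 then G (2*t) else
    2 * (α:ℂ) - (starRingEnd ℂ) (G (2-2*t)) with hF
  have hFcont : Continuous F := by
    apply Continuous.if_le
    · exact hGcont.comp (continuous_const.mul continuous_id)
    · exact continuous_const.sub
        (Complex.continuous_conj.comp (hGcont.comp (by continuity)))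
    · exact continuous_id
    · exact continuous_const
    · intro t ht
      rw [ht]
      rw [show (2:ℝ) * (1/2) = 1 by norm_num]
      rw [show (2:ℝ) - 1 = 1 by norm_num, hG1]
      exact hpconj.symm
  have hF1 : F 1 = 2 * (α:ℂ) := by
    simp only [hF]
    rw [if_neg (by norm_num), show (2:ℝ) - 2 * 1 = 0 by norm_num, hG0]
    simp
  have hconj2α : (starRingEnd ℂ) (2 * (α:ℂ)) = 2 * (α:ℂ) := by
    have e : (2 * (α:ℂ)) = ((2*α : ℝ) : ℂ) := by push_cast; ring
    rw [e, Complex.conj_ofReal]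
  refine ⟨F, ⟨hFcont.continuousOn, ?_, ?_⟩, ?_⟩
  · simp only [hF]
    rw [if_pos (by norm_num), show (2:ℝ) * 0 = 0 by norm_num]
    exact hG0
  · -- symmetry
    intro t ht
    rw [hF1]
    by_cases h1 : t ≤ 1/2
    · by_cases h2 : 1 - t ≤ 1/2
      · have ht2 : t = 1/2 := le_antisymm h1 (by linarith)
        subst ht2
        simp only [hF]
        rw [if_pos (le_refl _), show (1:ℝ) - 1/2 = 1/2 by norm_num,
          if_pos (le_refl _), show (2:ℝ) * (1/2) = 1 by norm_num, hG1]
        rw [Complex.add_conj]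
        apply Complex.ext <;> simp [hpre]
      · simp only [hF]
        rw [if_pos h1, if_neg h2]
        rw [show (2:ℝ) - 2 * (1 - t) = 2 * t by ring]
        rw [map_sub, hconj2α, Complex.conj_conj]
        ring
    · have h2 : 1 - t ≤ 1/2 := by linarith
      simp only [hF]
      rw [if_neg h1, if_pos h2]
      rw [show (2:ℝ) * (1 - t) = 2 - 2 * t by ring]
      ring
  · -- image
    apply Subset.antisymm
    · intro x hx
      obtain ⟨s, hs, hGs⟩ := hGsurj x hx
      refine ⟨s/2, ⟨by linarith [hs.1], by linarith [hs.2]⟩, ?_⟩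
      simp only [hF]
      rw [if_pos (by linarith [hs.2] : s/2 ≤ 1/2)]
      rw [show 2*(s/2) = s by ring]
      exact hGs
    · rintro _ ⟨t, ht, rfl⟩
      simp only [hF]
      by_cases h1 : t ≤ 1/2
      · rw [if_pos h1]; exact hGX _
      · rw [if_neg h1]; exact hσX _ (hGX _)

/-- Direction (1) → (2). -/
lemma one_to_two {X : Set ℂ} {f : ℝ → ℂ} (hmem : memF0 f) (hXf : X = f '' Icc 0 1) :
    (0:ℂ) ∈ X ∧ ∃ α : ℝ, (fun z => 2 * (α : ℂ) - (starRingEnd ℂ) z) '' X = X := by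
  obtain ⟨hf, hf0, hsym⟩ := hmem
  have h0X : (0:ℂ) ∈ X := by
    rw [hXf]
    exact ⟨0, by norm_num, hf0⟩
  have hhalf := hsym (1/2) (by norm_num)
  rw [show (1:ℝ) - 1/2 = 1/2 by norm_num] at hhalf
  rw [Complex.add_conj] at hhalf
  set α : ℝ := (f (1/2)).re with hαdef
  have hf1 : f 1 = 2 * (α:ℂ) := by
    rw [← hhalf]
    push_cast
    ring
  refine ⟨h0X, α, ?_⟩
  have hσ : ∀ t ∈ Icc (0:ℝ) 1, 2 * (α:ℂ) - (starRingEnd ℂ) (f t) = f (1-t) := by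
    intro t ht
    have h1t : 1 - t ∈ Icc (0:ℝ) 1 := ⟨by linarith [ht.2], by linarith [ht.1]⟩
    have := hsym (1-t) h1t
    rw [show (1:ℝ) - (1-t) = t by ring] at this
    rw [← hf1, ← this]
    ring
  apply Subset.antisymm
  · rintro _ ⟨z, hz, rfl⟩
    rw [hXf] at hz ⊢
    obtain ⟨t, ht, rfl⟩ := hz
    show 2 * (α:ℂ) - (starRingEnd ℂ) (f t) ∈ f '' Icc 0 1
    rw [hσ t ht]
    exact mem_image_of_mem f ⟨by linarith [ht.2], by linarith [ht.1]⟩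
  · intro z hz
    rw [hXf] at hz
    obtain ⟨t, ht, rfl⟩ := hz
    have h1t : 1 - t ∈ Icc (0:ℝ) 1 := ⟨by linarith [ht.2], by linarith [ht.1]⟩
    refine ⟨f (1-t), by rw [hXf]; exact mem_image_of_mem f h1t, ?_⟩
    show 2 * (α:ℂ) - (starRingEnd ℂ) (f (1-t)) = f t
    rw [hσ (1-t) h1t, show (1:ℝ) - (1-t) = t by ring]


end HM

/-- Characterization of images of functions in F₀: for a nonempty compact X ⊆ ℂ, the
following are equivalent: (1) X is the image of [0,1] under some f ∈ F₀; (2) 0 ∈ X, X is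
symmetric with respect to some vertical line Re(z) = α, and X is the image of [0,1] under
some continuous function; (3) 0 ∈ X, X is symmetric with respect to some vertical line, and
X is connected and locally connected. -/
theorem stmt_9 (X : Set ℂ) (hX : IsCompact X) (hne : X.Nonempty) :
    ((∃ f : ℝ → ℂ, memF0 f ∧ X = f '' Set.Icc 0 1) ↔
      ((0 : ℂ) ∈ X ∧ (∃ α : ℝ, (fun z => 2 * (α : ℂ) - (starRingEnd ℂ) z) '' X = X) ∧
        ∃ f : ℝ → ℂ, ContinuousOn f (Set.Icc 0 1) ∧ X = f '' Set.Icc 0 1)) ∧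
    (((0 : ℂ) ∈ X ∧ (∃ α : ℝ, (fun z => 2 * (α : ℂ) - (starRingEnd ℂ) z) '' X = X) ∧
        ∃ f : ℝ → ℂ, ContinuousOn f (Set.Icc 0 1) ∧ X = f '' Set.Icc 0 1) ↔
      ((0 : ℂ) ∈ X ∧ (∃ α : ℝ, (fun z => 2 * (α : ℂ) - (starRingEnd ℂ) z) '' X = X) ∧
        IsConnected X ∧ LocallyConnectedSpace X)) := by
  constructor
  · constructor
    · rintro ⟨f, hmem, hXf⟩
      obtain ⟨h0, α, hα⟩ := HM.one_to_two hmem hXf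
      exact ⟨h0, ⟨α, hα⟩, f, hmem.1, hXf⟩
    · rintro ⟨h0, ⟨α, hα⟩, f, hf, hXf⟩
      obtain ⟨F, hF, hXF⟩ := HM.two_to_one h0 hα hf hXf
      exact ⟨F, hF, hXF⟩
  · constructor
    · rintro ⟨h0, hsym, f, hf, hXf⟩
      refine ⟨h0, hsym, ⟨hne, by rw [hXf]; exact isPreconnected_Icc.image f hf⟩,
        HM.locallyConnected_image hf hXf⟩
    · rintro ⟨h0, hsym, hconn, hLC⟩
      obtain ⟨f, hfc, hXf⟩ := HM.peano hX hconn.isPreconnected hne hLC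
      exact ⟨h0, hsym, f, hfc.continuousOn, hXf⟩

end
end

section
/- Let α be a real number and define f : [0,1] → ℂ by f(t) = iα·t(1−t). Then f belongs to S if and only if |α| ≤ 2π. -/
noncomputable section
open MeasureTheory Set

lemma key_integral (c : ℂ) (hc : c ≠ 0) :
    (∫ t in (0:ℝ)..1, ((t:ℂ) * (1 - t) * Complex.exp (c * t)))
      = (Complex.exp c * (c - 2) + (c + 2)) / c^3 := by
  have key : ∀ t : ℝ, HasDerivAt (fun s : ℝ => (Complex.exp (c * s) *
      (-c^2 * ((s:ℂ)*(s:ℂ)) + c*(c+2) * s - (c+2))) * (c⁻¹)^3)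
      ((t:ℂ) * (1 - t) * Complex.exp (c * t)) t := by
    intro t
    have hs : HasDerivAt (fun s : ℝ => ((s:ℂ))) 1 t := Complex.ofRealCLM.hasDerivAt
    have h1 : HasDerivAt (fun s : ℝ => Complex.exp (c * s)) (c * Complex.exp (c * t)) t := by
      have := ((Complex.hasDerivAt_exp (c * t)).comp t
        (((hasDerivAt_id (t:ℂ)).const_mul c).comp_ofReal))
      simp only [Function.comp_def, id, mul_one] at this
      rw [mul_comm] at this
      exact this
    have h2a : HasDerivAt (fun s : ℝ => (-c^2 * ((s:ℂ)*(s:ℂ)) + c*(c+2) * s - (c+2)))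
        (-c^2 * (2*t) + c*(c+2)) t := by
      have p1 := (hs.mul hs).const_mul (-c^2)
      have p2 := hs.const_mul (c*(c+2))
      have := (p1.add p2).sub_const (c+2)
      convert this using 1
      · rfl
      · rfl
      · ring
    have := (h1.mul h2a).mul_const ((c⁻¹)^3)
    refine this.congr_deriv ?_
    field_simp
    ring
  rw [intervalIntegral.integral_eq_sub_of_hasDerivAt (fun t _ => key t) (by
    apply Continuous.intervalIntegrable; continuity)]
  simp only [Complex.ofReal_one, Complex.ofReal_zero, mul_one, mul_zero, Complex.exp_zero]
  field_simp
  ring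

lemma coeff_eval (α : ℝ) (h : ℤ) (hh : h ≠ 0) :
    fourierCoeff01 (fun t : ℝ => Complex.I * (α : ℂ) * (t : ℂ) * (1 - (t : ℂ))) h
      = Complex.I * ((-α / (2 * Real.pi ^ 2 * (h:ℝ) ^ 2) : ℝ) : ℂ) := by
  have hπ : (Real.pi : ℝ) ≠ 0 := Real.pi_ne_zero
  have hπc : (Real.pi : ℂ) ≠ 0 := by exact_mod_cast hπ
  have hhc : (h : ℂ) ≠ 0 := by exact_mod_cast hh
  set c : ℂ := 2 * Real.pi * Complex.I * (-(h:ℂ)) with hcdef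
  have hc : c ≠ 0 := by
    simp [hcdef, hπc, Complex.I_ne_zero, hhc]
  have hintegrand : ∀ t : ℝ,
      (Complex.I * (α : ℂ) * (t : ℂ) * (1 - (t : ℂ))) * e (-(h : ℂ) * (t : ℂ))
        = (Complex.I * α) * ((t:ℂ) * (1 - t) * Complex.exp (c * t)) := by
    intro t
    simp only [e, hcdef]
    ring_nf
  have : fourierCoeff01 (fun t : ℝ => Complex.I * (α : ℂ) * (t : ℂ) * (1 - (t : ℂ))) h
      = (Complex.I * α) * ∫ t in (0:ℝ)..1, ((t:ℂ) * (1 - t) * Complex.exp (c * t)) := by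
    rw [fourierCoeff01, ← intervalIntegral.integral_const_mul]
    exact intervalIntegral.integral_congr fun t _ => hintegrand t
  rw [this, key_integral c hc]
  have hexp : Complex.exp c = 1 := by
    have := Complex.exp_int_mul_two_pi_mul_I (-h)
    rw [hcdef]
    rw [← this]
    congr 1
    push_cast
    ring
  rw [hexp]
  have hc2 : c ^ 3 = c ^ 2 * c := by ring
  have hcsq : c ^ 2 = -(4 * (Real.pi:ℂ)^2 * (h:ℂ)^2) := by
    rw [hcdef]
    have : Complex.I ^ 2 = -1 := Complex.I_sq
    ring_nf
    rw [Complex.I_sq]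
    ring
  push_cast
  field_simp
  rw [hc2, hcsq]
  ring

lemma gfun_eq (α : ℝ) :
    (fun t : ℝ => (fun t : ℝ => Complex.I * (α : ℂ) * (t : ℂ) * (1 - (t : ℂ))) t
      - (t : ℂ) * (fun t : ℝ => Complex.I * (α : ℂ) * (t : ℂ) * (1 - (t : ℂ))) 1)
    = fun t : ℝ => Complex.I * (α : ℂ) * (t : ℂ) * (1 - (t : ℂ)) := by
  funext t
  norm_num

/-- The function f(t) = iα·t(1-t) belongs to S if and only if |α| ≤ 2π. -/
theorem stmt_14 (α : ℝ) :
    memS (fun t : ℝ => Complex.I * (α : ℂ) * (t : ℂ) * (1 - (t : ℂ))) ↔ |α| ≤ 2 * Real.pi := by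
  have hπ := Real.pi_pos
  constructor
  · rintro ⟨-, -, -, -, hco⟩
    have h1 := (hco 1 one_ne_zero).2
    rw [gfun_eq, coeff_eval α 1 one_ne_zero] at h1
    rw [norm_mul, Complex.norm_I, Complex.norm_real, Real.norm_eq_abs, one_mul] at h1
    simp only [Int.cast_one, one_pow, mul_one, abs_one] at h1
    rw [abs_div, abs_neg, abs_of_pos (show (0:ℝ) < 2 * Real.pi ^ 2 by positivity)] at h1
    rw [div_le_div_iff₀ (by positivity) (by positivity)] at h1
    nlinarith [abs_nonneg α, h1, hπ]
  · intro hα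
    refine ⟨by fun_prop, by norm_num, by norm_num, by norm_num, ?_⟩
    intro h hh
    rw [gfun_eq, coeff_eval α h hh]
    constructor
    · rw [Complex.mul_re, Complex.I_re, Complex.I_im, Complex.ofReal_im]
      ring
    · rw [norm_mul, Complex.norm_I, Complex.norm_real, Real.norm_eq_abs, one_mul, abs_div, abs_neg]
      have hh1 : (1:ℝ) ≤ |(h:ℝ)| := by
        rw [← Int.cast_abs]; exact_mod_cast Int.one_le_abs hh
      have hhpos : (0:ℝ) < |(h:ℝ)| := by linarith
      have hsq : ((h:ℝ))^2 = |(h:ℝ)|^2 := (sq_abs _).symm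
      rw [abs_of_pos (show (0:ℝ) < 2 * Real.pi ^ 2 * (h:ℝ) ^ 2 by
        have : ((h:ℝ)) ≠ 0 := by exact_mod_cast hh
        positivity)]
      rw [div_le_div_iff₀ (by
        have : ((h:ℝ)) ≠ 0 := by exact_mod_cast hh
        positivity) (by positivity)]
      rw [hsq]
      nlinarith [mul_le_mul_of_nonneg_right hα (by positivity : (0:ℝ) ≤ Real.pi * |(h:ℝ)|),
        mul_le_mul_of_nonneg_left hh1 (by positivity : (0:ℝ) ≤ 2 * Real.pi ^ 2 * |(h:ℝ)|)]


end
end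

section
/- Let τ : [0,1] → ℝ be the Takagi function, τ(t) = Σ_{j≥0} ⟨2^j t⟩ / 2^j, where ⟨x⟩ denotes the distance from x to the nearest integer. Then the function f : [0,1] → ℂ defined by f(t) = t + i·τ(t) belongs to S. -/
noncomputable section
open MeasureTheory Set

/-- Takagi function: τ(t) = Σ_{j≥0} ⟨2^j t⟩ / 2^j, ⟨x⟩ = distance to nearest integer. -/
def takagi (t : ℝ) : ℝ := ∑' j : ℕ, |2 ^ j * t - round (2 ^ j * t)| / 2 ^ j

section AuxTakagi
open intervalIntegral Complex

/-- distance to nearest integer -/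
def sfn (x : ℝ) : ℝ := |x - round x|

lemma round_eq_of (x : ℝ) (n : ℤ) (h : |x - n| < 1/2) : round x = n := by
  rw [round_eq]
  rw [abs_lt] at h
  have : (n : ℝ) ≤ x + 1/2 := by linarith
  have h2 : x + 1/2 < n + 1 := by push_cast; linarith
  exact_mod_cast Int.floor_eq_iff.mpr ⟨by exact_mod_cast this, by exact_mod_cast h2⟩

lemma sfn_le (x : ℝ) (n : ℤ) : sfn x ≤ |x - n| := by
  rcases le_or_gt (1/2) (|x - n|) with h | h
  · exact le_trans (abs_sub_round x) h
  · rw [sfn, round_eq_of x n h]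

lemma sfn_lipschitz : LipschitzWith 1 sfn := by
  apply LipschitzWith.of_dist_le_mul
  intro x y
  simp only [Real.dist_eq, NNReal.coe_one, one_mul]
  rw [abs_sub_le_iff]
  constructor
  · calc sfn x - sfn y ≤ |x - round y| - sfn y := by linarith [sfn_le x (round y)]
      _ ≤ |x - y| := by rw [sfn]; have := abs_sub_abs_le_abs_sub (x - round y) (y - round y); simp only [sub_sub_sub_cancel_right] at this; linarith
  · calc sfn y - sfn x ≤ |y - round x| - sfn x := by linarith [sfn_le y (round x)]
      _ ≤ |x - y| := by rw [sfn]; have := abs_sub_abs_le_abs_sub (y - round x) (x - round x); simp only [sub_sub_sub_cancel_right] at this; rw [abs_sub_comm x y]; linarith [abs_sub_comm y x ▸ this]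

lemma sfn_continuous : Continuous sfn := sfn_lipschitz.continuous

lemma sfn_nonneg (x : ℝ) : 0 ≤ sfn x := abs_nonneg _

lemma sfn_le_half (x : ℝ) : sfn x ≤ 1/2 := abs_sub_round x

lemma sfn_int (n : ℤ) : sfn n = 0 := by simp [sfn]

lemma sfn_add_int (x : ℝ) (n : ℤ) : sfn (x + n) = sfn x := by
  simp [sfn, round_add_intCast]

lemma takagi_eq (t : ℝ) : takagi t = ∑' j : ℕ, sfn (2 ^ j * t) / 2 ^ j := rfl

lemma term_bound (j : ℕ) (t : ℝ) : ‖sfn (2 ^ j * t) / 2 ^ j‖ ≤ (1/2)^j := by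
  rw [Real.norm_eq_abs, abs_div, _root_.abs_of_nonneg (sfn_nonneg _), _root_.abs_of_nonneg (by positivity : (0:ℝ) ≤ 2^j)]
  rw [div_pow, one_pow, div_le_div_iff₀ (by positivity) (by positivity)]
  nlinarith [sfn_le_half (2^j * t), sfn_nonneg (2^j*t), pow_pos (by norm_num : (0:ℝ) < 2) j]

lemma takagi_continuous : Continuous takagi := by
  rw [show takagi = fun t => ∑' j : ℕ, sfn (2 ^ j * t) / 2 ^ j from rfl]
  apply continuous_tsum (u := fun j => (1/2)^j)
  · intro j; exact (sfn_continuous.comp (continuous_const.mul continuous_id)).div_const _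
  · exact summable_geometric_of_lt_one (by norm_num) (by norm_num)
  · intro j t; exact term_bound j t

lemma takagi_summable (t : ℝ) : Summable (fun j : ℕ => sfn (2 ^ j * t) / 2 ^ j) := by
  apply Summable.of_norm
  exact Summable.of_nonneg_of_le (fun j => norm_nonneg _) (fun j => term_bound j t)
    (summable_geometric_of_lt_one (by norm_num) (by norm_num))

lemma takagi_zero : takagi 0 = 0 := by
  rw [takagi_eq]
  have h0 : sfn 0 = 0 := by exact_mod_cast sfn_int 0
  simp [h0]

lemma takagi_one : takagi 1 = 0 := by
  rw [takagi_eq]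
  have : ∀ j : ℕ, sfn (2^j * 1) / 2^j = 0 := by
    intro j
    rw [mul_one, show ((2:ℝ)^j) = ((2^j : ℤ) : ℝ) by push_cast; ring, sfn_int, zero_div]
  simp only [this, tsum_zero]

lemma hasDerivAt_cexp_lin (c : ℂ) (u : ℝ) :
    HasDerivAt (fun x : ℝ => Complex.exp (c * x)) (c * Complex.exp (c * u)) u := by
  have h1 : HasDerivAt (fun x : ℝ => c * (x : ℂ)) c u := by
    have := ((hasDerivAt_id (u : ℂ)).const_mul c).comp_ofReal; simp only [mul_one, id] at this; exact this
  have := (Complex.hasDerivAt_exp (c * u)).comp u h1; rw [mul_comm] at this; exact this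

lemma hasDerivAt_F (c : ℂ) (hc : c ≠ 0) (u : ℝ) :
    HasDerivAt (fun x : ℝ => ((x : ℂ)/c - 1/c^2) * Complex.exp (c * x))
      ((u : ℂ) * Complex.exp (c * u)) u := by
  have h1 : HasDerivAt (fun x : ℝ => ((x : ℂ)/c - 1/c^2)) (1/c) u := by
    have : HasDerivAt (fun x : ℝ => (x : ℂ)) 1 u := Complex.ofRealCLM.hasDerivAt
    have h := (this.div_const c).sub_const (1/c^2)
    simpa [one_div] using h
  have := h1.mul (hasDerivAt_cexp_lin c u)
  convert this using 1
  · rfl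
  · rfl
  field_simp
  ring

lemma integral_x_exp (c : ℂ) (hc : c ≠ 0) (a b : ℝ) :
    ∫ u in a..b, (u : ℂ) * Complex.exp (c * u) =
      (((b:ℂ)/c - 1/c^2) * Complex.exp (c * b)) - (((a:ℂ)/c - 1/c^2) * Complex.exp (c * a)) := by
  apply integral_eq_sub_of_hasDerivAt (fun u _ => hasDerivAt_F c hc u)
  apply Continuous.intervalIntegrable
  exact Complex.continuous_ofReal.mul (Complex.continuous_exp.comp (continuous_const.mul Complex.continuous_ofReal))

lemma integral_exp_lin (c : ℂ) (hc : c ≠ 0) (a b : ℝ) :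
    ∫ u in a..b, Complex.exp (c * u) = (Complex.exp (c * b) - Complex.exp (c * a)) / c :=
  integral_exp_mul_complex hc

lemma sfn_left {u : ℝ} (h0 : 0 ≤ u) (h1 : u ≤ 1/2) : sfn u = u := by
  rcases lt_or_eq_of_le h1 with h | h
  · rw [sfn, round_eq_of u 0 (by push_cast; rw [sub_zero, _root_.abs_of_nonneg h0]; exact h)]
    push_cast
    rw [sub_zero, _root_.abs_of_nonneg h0]
  · subst h; rw [sfn, show round (1/2 : ℝ) = 1 by norm_num [round_eq]]
    norm_num

lemma sfn_right {u : ℝ} (h0 : 1/2 ≤ u) (h1 : u ≤ 1) : sfn u = 1 - u := by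
  rcases lt_or_eq_of_le h0 with h | h
  · rw [sfn, round_eq_of u 1 (by rw [abs_of_nonpos (by push_cast; linarith)]; push_cast; linarith)]
    push_cast; rw [abs_of_nonpos (by linarith)]; ring
  · subst h; rw [sfn, show round (1/2 : ℝ) = 1 by norm_num [round_eq]]
    norm_num

lemma exp_half (m : ℤ) : Complex.exp ((-2*Real.pi*I*m) * ((1/2:ℝ):ℂ)) = (-1)^m := by
  rw [show ((-2*Real.pi*I*m) * ((1/2:ℝ):ℂ)) = ((-m : ℤ) : ℂ) * (Real.pi * I) by push_cast; ring,
    Complex.exp_int_mul, Complex.exp_pi_mul_I, zpow_neg, ← inv_zpow, inv_neg, inv_one]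

lemma exp_one' (m : ℤ) : Complex.exp ((-2*Real.pi*I*m) * ((1:ℝ):ℂ)) = 1 := by
  rw [show ((-2*Real.pi*I*m) * ((1:ℝ):ℂ)) = ((-m : ℤ) : ℂ) * (2 * Real.pi * I) by push_cast; ring,
    Complex.exp_int_mul_two_pi_mul_I]

lemma shat_eq (m : ℤ) (hm : m ≠ 0) :
    ∫ u in (0:ℝ)..1, (sfn u : ℂ) * Complex.exp ((-2*Real.pi*I*m) * u) =
      ((-1)^m - 1) / (2 * Real.pi^2 * m^2) := by
  set c : ℂ := -2*Real.pi*I*m with hc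
  have hπ : (Real.pi : ℂ) ≠ 0 := by exact_mod_cast Complex.ofReal_ne_zero.mpr Real.pi_ne_zero
  have hmC : (m : ℂ) ≠ 0 := Int.cast_ne_zero.mpr hm
  have hcne : c ≠ 0 := by
    rw [hc]
    simp only [mul_ne_zero_iff]
    exact ⟨⟨⟨by norm_num, hπ⟩, Complex.I_ne_zero⟩, hmC⟩
  have hc2 : c^2 = -(4 * (Real.pi:ℂ)^2 * (m:ℂ)^2) := by
    rw [hc, show (-2*(Real.pi:ℂ)*I*m)^2 = (2*Real.pi*m)^2 * I^2 by ring, Complex.I_sq]; ring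
  have ehalf : Complex.exp (c * ((1/2:ℝ):ℂ)) = (-1)^m := by rw [hc]; exact exp_half m
  have eone : Complex.exp (c * ((1:ℝ):ℂ)) = 1 := by rw [hc]; exact exp_one' m
  have ezero : Complex.exp (c * ((0:ℝ):ℂ)) = 1 := by push_cast; rw [mul_zero, Complex.exp_zero]
  have hcont : Continuous fun u : ℝ => (sfn u : ℂ) * Complex.exp (c * u) :=
    (Complex.continuous_ofReal.comp sfn_continuous).mul
      (Complex.continuous_exp.comp (continuous_const.mul Complex.continuous_ofReal))
  have hcont2 : Continuous fun u : ℝ => Complex.exp (c * u) :=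
    Complex.continuous_exp.comp (continuous_const.mul Complex.continuous_ofReal)
  have hcont3 : Continuous fun u : ℝ => (u:ℂ) * Complex.exp (c * u) :=
    Complex.continuous_ofReal.mul hcont2
  have hsplit : ∫ u in (0:ℝ)..1, (sfn u : ℂ) * Complex.exp (c * u) =
      (∫ u in (0:ℝ)..(1/2), (sfn u : ℂ) * Complex.exp (c * u)) +
      ∫ u in (1/2:ℝ)..1, (sfn u : ℂ) * Complex.exp (c * u) :=
    (integral_add_adjacent_intervals (hcont.intervalIntegrable _ _) (hcont.intervalIntegrable _ _)).symm
  have hL : ∫ u in (0:ℝ)..(1/2), (sfn u : ℂ) * Complex.exp (c * u) =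
      ∫ u in (0:ℝ)..(1/2), (u : ℂ) * Complex.exp (c * u) := by
    apply integral_congr
    intro u hu
    rw [uIcc_of_le (by norm_num)] at hu
    simp only [sfn_left hu.1 hu.2]
  have hR : ∫ u in (1/2:ℝ)..1, (sfn u : ℂ) * Complex.exp (c * u) =
      (∫ u in (1/2:ℝ)..1, Complex.exp (c * u)) - ∫ u in (1/2:ℝ)..1, (u:ℂ) * Complex.exp (c * u) := by
    rw [← intervalIntegral.integral_sub (hcont2.intervalIntegrable _ _) (hcont3.intervalIntegrable _ _)]
    apply integral_congr
    intro u hu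
    rw [uIcc_of_le (by norm_num)] at hu
    simp only [sfn_right hu.1 hu.2]
    push_cast; ring
  rw [hsplit, hL, hR, integral_x_exp c hcne, integral_x_exp c hcne,
    integral_exp_mul_complex hcne, ehalf, eone, ezero]
  clear_value c
  set w : ℂ := (-1:ℂ)^m with hw
  clear_value w
  have hd : (2 * (Real.pi:ℂ)^2 * (m:ℂ)^2) ≠ 0 := by
    simp [hπ, hmC]
  have hd4 : -((4:ℂ) * (Real.pi:ℂ)^2 * (m:ℂ)^2) ≠ 0 := by
    simp [hπ, hmC]
  calc _ = 2*(1 - w)/c^2 := by push_cast; ring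
    _ = (w - 1) / (2 * (Real.pi:ℂ)^2 * (m:ℂ)^2) := by
        rw [hc2, div_eq_div_iff hd4 hd]
        ring

lemma cont_G (c' : ℂ) : Continuous fun u : ℝ => (sfn u : ℂ) * Complex.exp (c' * u) :=
  (Complex.continuous_ofReal.comp sfn_continuous).mul
    (Complex.continuous_exp.comp (continuous_const.mul Complex.continuous_ofReal))

lemma cj_split (N : ℕ) (c' : ℂ) :
    ∫ u in (0:ℝ)..((N:ℕ):ℝ), (sfn u : ℂ) * Complex.exp (c' * u) =
    (∑ k ∈ Finset.range N, Complex.exp (c' * k)) *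
      ∫ u in (0:ℝ)..1, (sfn u : ℂ) * Complex.exp (c' * u) := by
  have hcont := cont_G c'
  have hsum := intervalIntegral.sum_integral_adjacent_intervals
    (a := fun k : ℕ => (k : ℝ)) (n := N)
    (fun k _ => hcont.intervalIntegrable (μ := volume) _ _)
  simp only [Nat.cast_zero] at hsum
  rw [← hsum, Finset.sum_mul]
  apply Finset.sum_congr rfl
  intro k _
  have hshift := intervalIntegral.integral_comp_add_right
    (a := (0:ℝ)) (b := (1:ℝ))
    (fun u : ℝ => (sfn u : ℂ) * Complex.exp (c' * u)) (k : ℝ)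
  rw [zero_add] at hshift
  have hbnd : (1 : ℝ) + (k:ℝ) = ((k+1 : ℕ) : ℝ) := by push_cast; ring
  rw [hbnd] at hshift
  rw [← hshift]
  have : (fun x : ℝ => (fun u : ℝ => (sfn u : ℂ) * Complex.exp (c' * u)) (x + (k:ℝ))) =
      fun x : ℝ => Complex.exp (c' * k) * ((sfn x : ℂ) * Complex.exp (c' * x)) := by
    funext x
    simp only
    rw [show ((k:ℝ):ℝ) = ((k:ℤ):ℝ) by push_cast; ring] -- no-op guard
    rw [show x + ((k:ℤ):ℝ) = x + ((k:ℤ):ℝ) from rfl, sfn_add_int x (k:ℤ)]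
    rw [show c' * ((x + ((k:ℤ):ℝ) : ℝ) : ℂ) = c' * x + c' * k by push_cast; ring, Complex.exp_add]
    push_cast
    ring
  rw [this, intervalIntegral.integral_const_mul]

lemma cj_eq (j : ℕ) (h : ℤ) (hh : h ≠ 0) :
    ∫ t in (0:ℝ)..1, (sfn (2^j * t) : ℂ) * Complex.exp ((-2*Real.pi*I*h) * t) =
      if (2^j : ℤ) ∣ h then
        ((-1)^(h / 2^j) - 1) / (2 * (Real.pi:ℂ)^2 * ((h / 2^j : ℤ):ℂ)^2)
      else 0 := by
  have h2R : ((2:ℝ)^j) ≠ 0 := by positivity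
  have h2C : ((2:ℂ)^j) ≠ 0 := by
    simp [pow_ne_zero]
  set c' : ℂ := (-2*Real.pi*I*h) / (2^j : ℂ) with hc'
  have key : (fun t : ℝ => (sfn (2^j * t) : ℂ) * Complex.exp ((-2*Real.pi*I*h) * t)) =
      fun t : ℝ => (fun u : ℝ => (sfn u : ℂ) * Complex.exp (c' * u)) ((2:ℝ)^j * t) := by
    funext t
    simp only
    congr 1
    rw [hc']
    congr 1
    push_cast
    field_simp
  rw [key, intervalIntegral.integral_comp_mul_left
    (fun u : ℝ => (sfn u : ℂ) * Complex.exp (c' * u)) h2R]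
  rw [mul_zero, mul_one, show ((2:ℝ)^j) = ((2^j : ℕ) : ℝ) by push_cast; ring]
  rw [cj_split (2^j) c']
  by_cases hdvd : (2^j : ℤ) ∣ h
  · rw [if_pos hdvd]
    obtain ⟨m, hm⟩ := hdvd
    have hmdiv : h / 2^j = m := by rw [hm, Int.mul_ediv_cancel_left _ (by positivity)]
    have hm0 : m ≠ 0 := fun h0 => hh (by rw [hm, h0, mul_zero])
    have hc'm : c' = -2*Real.pi*I*m := by
      rw [hc', hm]
      push_cast
      field_simp
    have hexp1 : ∀ k : ℕ, Complex.exp (c' * k) = 1 := by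
      intro k
      rw [hc'm, show (-2*Real.pi*I*(m:ℂ)) * k = ((-(m * k) : ℤ) : ℂ) * (2*Real.pi*I) by push_cast; ring,
        Complex.exp_int_mul_two_pi_mul_I]
    simp only [hexp1, Finset.sum_const, Finset.card_range, nsmul_eq_mul, mul_one]
    rw [hc'm, shat_eq m hm0, hmdiv]
    rw [Complex.real_smul]
    push_cast
    field_simp
  · rw [if_neg hdvd]
    have hω : Complex.exp c' ≠ 1 := by
      intro h1
      obtain ⟨n, hn⟩ := Complex.exp_eq_one_iff.mp h1
      apply hdvd
      rw [hc'] at hn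
      have h2πI : (2*(Real.pi:ℂ)*I) ≠ 0 := by
        simp [Real.pi_ne_zero, Complex.I_ne_zero]
      have : (-h : ℂ) = (n : ℂ) * (2^j : ℂ) := by
        rw [div_eq_iff h2C] at hn
        have h2 : (2*(Real.pi:ℂ)*I) * (-(h:ℂ)) = (2*(Real.pi:ℂ)*I) * ((n:ℂ) * (2^j:ℂ)) := by
          linear_combination hn
        exact mul_left_cancel₀ h2πI h2
      have hint : (-h : ℤ) = n * 2^j := by exact_mod_cast this
      exact ⟨-n, by linarith [hint]⟩
    have hsum : (∑ k ∈ Finset.range (2^j), Complex.exp (c' * k)) = 0 := by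
      have : ∀ k : ℕ, Complex.exp (c' * k) = (Complex.exp c')^k := fun k => by
        rw [← Complex.exp_nat_mul, mul_comm]
      simp only [this]
      rw [geom_sum_eq hω]
      have : Complex.exp c' ^ (2^j : ℕ) = 1 := by
        rw [← Complex.exp_nat_mul, show ((2^j : ℕ) : ℂ) * c' = ((-h : ℤ) : ℂ) * (2*Real.pi*I) by
          rw [hc']; push_cast; field_simp]
        exact Complex.exp_int_mul_two_pi_mul_I _
      rw [this, sub_self, zero_div]
    rw [hsum, zero_mul, smul_zero]

/-- real coefficient -/
def rcoef (h : ℤ) (j : ℕ) : ℝ :=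
  ((2:ℝ)^j)⁻¹ * (if (2^j : ℤ) ∣ h then
    ((-1:ℝ)^(h / 2^j) - 1) / (2 * Real.pi^2 * ((h / 2^j : ℤ):ℝ)^2) else 0)

lemma normE (h : ℤ) (t : ℝ) : ‖Complex.exp ((-2*Real.pi*I*h) * t)‖ = 1 := by
  rw [show ((-2*Real.pi*I*(h:ℂ)) * (t:ℂ)) = ((-2*Real.pi*h*t : ℝ) : ℂ) * I by push_cast; ring]
  exact Complex.norm_exp_ofReal_mul_I _

lemma rcoef_abs_le (h : ℤ) (hh : h ≠ 0) (j : ℕ) :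
    |rcoef h j| ≤ if (2^j : ℤ) ∣ h then (2:ℝ)^j / (Real.pi^2 * (h:ℝ)^2) else 0 := by
  rw [rcoef]
  by_cases hd : (2^j : ℤ) ∣ h
  · rw [if_pos hd, if_pos hd]
    obtain ⟨m, hm⟩ := hd
    have hmdiv : h / 2^j = m := by rw [hm, Int.mul_ediv_cancel_left _ (by positivity)]
    have hm0 : m ≠ 0 := fun h0 => hh (by rw [hm, h0, mul_zero])
    have hmR : ((m:ℝ)) ≠ 0 := Int.cast_ne_zero.mpr hm0
    have hm2 : (1:ℝ) ≤ (m:ℝ)^2 := by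
      have h1 : (1:ℤ) ≤ m^2 := by nlinarith [Int.one_le_abs hm0, _root_.sq_abs m]
      exact_mod_cast h1
    rw [hmdiv]
    have hnum : |((-1:ℝ)^m - 1)| ≤ 2 := by
      rcases Int.even_or_odd m with he | ho
      · rw [Even.neg_one_zpow he]; norm_num
      · rw [Odd.neg_one_zpow ho]; norm_num
    have hπ : (0:ℝ) < Real.pi := Real.pi_pos
    rw [abs_mul, abs_div, _root_.abs_of_nonneg (by positivity : (0:ℝ) ≤ ((2:ℝ)^j)⁻¹),
      _root_.abs_of_nonneg (by positivity : (0:ℝ) ≤ 2 * Real.pi^2 * (m:ℝ)^2)]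
    have hh2 : (h:ℝ)^2 = ((2:ℝ)^j)^2 * (m:ℝ)^2 := by
      rw [hm]; push_cast; ring
    rw [hh2]
    have heq : ((2:ℝ)^j)⁻¹ * (2 / (2 * Real.pi^2 * (m:ℝ)^2)) =
        (2:ℝ)^j / (Real.pi^2 * (((2:ℝ)^j)^2 * (m:ℝ)^2)) := by
      have h2j : ((2:ℝ)^j) ≠ 0 := by positivity
      field_simp
    calc ((2:ℝ)^j)⁻¹ * (|(-1:ℝ)^m - 1| / (2 * Real.pi^2 * (m:ℝ)^2))
        ≤ ((2:ℝ)^j)⁻¹ * (2 / (2 * Real.pi^2 * (m:ℝ)^2)) := by gcongr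
      _ = _ := heq
  · rw [if_neg hd, if_neg hd, mul_zero, abs_zero]

lemma rcoef_eq_coe (h : ℤ) (j : ℕ) :
    ((rcoef h j : ℝ) : ℂ) = ((2:ℂ)^j)⁻¹ * (if (2^j : ℤ) ∣ h then
      ((-1:ℂ)^(h / 2^j) - 1) / (2 * (Real.pi:ℂ)^2 * ((h / 2^j : ℤ):ℂ)^2) else 0) := by
  rw [rcoef]
  by_cases hd : (2^j : ℤ) ∣ h
  · rw [if_pos hd, if_pos hd]
    push_cast
    ring
  · rw [if_neg hd, if_neg hd]
    push_cast
    ring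

lemma tauhat_eq (h : ℤ) (hh : h ≠ 0) :
    ∫ t in (0:ℝ)..1, (takagi t : ℂ) * Complex.exp ((-2*Real.pi*I*h) * t) =
      ((∑' j : ℕ, rcoef h j : ℝ) : ℂ) := by
  set E : ℝ → ℂ := fun t => Complex.exp ((-2*Real.pi*I*h) * t) with hE
  have hEcont : Continuous E :=
    Complex.continuous_exp.comp (continuous_const.mul Complex.continuous_ofReal)
  set F : ℕ → ℝ → ℂ := fun j t => ((sfn (2^j * t) / 2^j : ℝ) : ℂ) * E t with hF
  have hFcont : ∀ j, Continuous (F j) := by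
    intro j
    exact (Complex.continuous_ofReal.comp
      ((sfn_continuous.comp (continuous_const.mul continuous_id)).div_const _)).mul hEcont
  have hnormF : ∀ j t, ‖F j t‖ ≤ (1/2)^j := by
    intro j t
    rw [hF]
    simp only [norm_mul]
    rw [show ‖E t‖ = 1 from normE h t, mul_one, Complex.norm_real, Real.norm_eq_abs]
    rw [abs_div, _root_.abs_of_nonneg (sfn_nonneg _),
      _root_.abs_of_nonneg (by positivity : (0:ℝ) ≤ (2:ℝ)^j)]
    rw [div_pow, one_pow, div_le_div_iff₀ (by positivity) (by positivity)]
    nlinarith [sfn_le_half (2^j * t), sfn_nonneg (2^j*t), pow_pos (by norm_num : (0:ℝ) < 2) j]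
  have hsumm : ∀ t : ℝ, Summable (fun j : ℕ => sfn (2 ^ j * t) / 2 ^ j) := by
    intro t
    apply Summable.of_norm
    apply Summable.of_nonneg_of_le (fun j => norm_nonneg _) _
      (summable_geometric_of_lt_one (by norm_num) (by norm_num : (1:ℝ)/2 < 1))
    intro j
    rw [Real.norm_eq_abs, abs_div, _root_.abs_of_nonneg (sfn_nonneg _),
      _root_.abs_of_nonneg (by positivity : (0:ℝ) ≤ (2:ℝ)^j),
      div_pow, one_pow, div_le_div_iff₀ (by positivity) (by positivity)]
    nlinarith [sfn_le_half (2^j * t), sfn_nonneg (2^j*t), pow_pos (by norm_num : (0:ℝ) < 2) j]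
  have hpt : ∀ t : ℝ, (takagi t : ℂ) * E t = ∑' j : ℕ, F j t := by
    intro t
    have h1 : ((takagi t : ℝ) : ℂ) = ∑' j : ℕ, ((sfn (2^j*t) / 2^j : ℝ) : ℂ) := by
      rw [show takagi t = ∑' j : ℕ, sfn (2^j*t) / 2^j from rfl]
      exact Complex.ofReal_tsum _
    rw [h1, tsum_mul_right]
  have hInt : ∀ j, Integrable (F j) (volume.restrict (Ioc (0:ℝ) 1)) :=
    fun j => (hFcont j).integrableOn_Ioc
  have hSumInt : Summable fun j => ∫ t in Ioc (0:ℝ) 1, ‖F j t‖ := by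
    refine Summable.of_nonneg_of_le
      (fun j => MeasureTheory.integral_nonneg (fun t => norm_nonneg _))
      (fun j => ?_)
      (summable_geometric_of_lt_one (by norm_num) (by norm_num : (1:ℝ)/2 < 1))
    calc ∫ t in Ioc (0:ℝ) 1, ‖F j t‖ ≤ ∫ _t in Ioc (0:ℝ) 1, (1/2:ℝ)^j := by
          apply setIntegral_mono_on ((hInt j).norm) (integrableOn_const (by simp))
            measurableSet_Ioc
          intro t _
          exact hnormF j t
      _ = (1/2:ℝ)^j := by simp
  have hswap := MeasureTheory.integral_tsum_of_summable_integral_norm hInt hSumInt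
  rw [intervalIntegral.integral_of_le (by norm_num : (0:ℝ) ≤ 1)]
  have : ∀ t : ℝ, (takagi t : ℂ) * E t = ∑' j : ℕ, F j t := hpt
  calc ∫ t in Ioc (0:ℝ) 1, (takagi t : ℂ) * E t
      = ∫ t in Ioc (0:ℝ) 1, ∑' j : ℕ, F j t := by
        apply MeasureTheory.integral_congr_ae
        filter_upwards with t using hpt t
    _ = ∑' j : ℕ, ∫ t in Ioc (0:ℝ) 1, F j t := hswap.symm
    _ = ((∑' j : ℕ, rcoef h j : ℝ) : ℂ) := by
        rw [Complex.ofReal_tsum]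
        apply tsum_congr
        intro j
        rw [← intervalIntegral.integral_of_le (by norm_num : (0:ℝ) ≤ 1)]
        have hconst : ∀ t : ℝ, F j t = ((2:ℂ)^j)⁻¹ * ((sfn (2^j * t) : ℂ) * E t) := by
          intro t
          rw [hF]
          push_cast
          ring
        rw [show (fun t => F j t) = fun t : ℝ => ((2:ℂ)^j)⁻¹ * ((sfn (2^j * t) : ℂ) * E t)
            from funext hconst]
        rw [intervalIntegral.integral_const_mul, cj_eq j h hh, rcoef_eq_coe]

lemma tsum_rcoef_bound (h : ℤ) (hh : h ≠ 0) :
    |∑' j : ℕ, rcoef h j| ≤ 1 / (Real.pi * |(h:ℝ)|) ∧ Summable (rcoef h) := by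
  set b : ℕ → ℝ := fun j => if (2^j : ℤ) ∣ h then (2:ℝ)^j / (Real.pi^2 * (h:ℝ)^2) else 0 with hb
  have hNA : h.natAbs ≠ 0 := Int.natAbs_ne_zero.mpr hh
  set K : ℕ := Nat.log 2 h.natAbs + 1 with hK
  have hb0 : ∀ j ∉ Finset.range K, b j = 0 := by
    intro j hj
    rw [Finset.mem_range, not_lt] at hj
    rw [hb]
    simp only
    rw [if_neg]
    intro hd
    have hd' : 2^j ∣ h.natAbs := by
      have h2 := Int.natAbs_dvd_natAbs.mpr hd
      simpa [Int.natAbs_pow] using h2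
    have hle : 2^j ≤ h.natAbs := Nat.le_of_dvd (Nat.pos_of_ne_zero hNA) hd'
    have hlog : j ≤ Nat.log 2 h.natAbs := (Nat.le_log_iff_pow_le (by norm_num) hNA).mpr hle
    omega
  have hbsumm : Summable b := summable_of_ne_finset_zero hb0
  have habs_le : ∀ j, |rcoef h j| ≤ b j := fun j => rcoef_abs_le h hh j
  have hsumabs : Summable (fun j => |rcoef h j|) :=
    Summable.of_nonneg_of_le (fun j => abs_nonneg _) habs_le hbsumm
  have hsum : Summable (rcoef h) := hsumabs.of_abs
  refine ⟨?_, hsum⟩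
  have hsn : Summable (fun j => ‖rcoef h j‖) := by
    simp only [Real.norm_eq_abs]
    exact hsumabs
  have h1 : |∑' j : ℕ, rcoef h j| ≤ ∑' j : ℕ, |rcoef h j| := by
    have hn := norm_tsum_le_tsum_norm hsn
    simp only [Real.norm_eq_abs] at hn
    exact hn
  have h2 : ∑' j : ℕ, |rcoef h j| ≤ ∑' j : ℕ, b j := hsumabs.tsum_le_tsum habs_le hbsumm
  have h3 : ∑' j : ℕ, b j = ∑ j ∈ Finset.range K, b j := tsum_eq_sum hb0
  have hπ : (0:ℝ) < Real.pi := Real.pi_pos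
  have hhR : (h:ℝ) ≠ 0 := Int.cast_ne_zero.mpr hh
  have hh2 : (0:ℝ) < (h:ℝ)^2 := by positivity
  have habs : (0:ℝ) < |(h:ℝ)| := abs_pos.mpr hhR
  have h4 : ∑ j ∈ Finset.range K, b j ≤ ∑ j ∈ Finset.range K, (2:ℝ)^j / (Real.pi^2 * (h:ℝ)^2) := by
    apply Finset.sum_le_sum
    intro j _
    rw [hb]
    simp only
    split_ifs
    · exact le_refl _
    · positivity
  have hgeom : ∑ j ∈ Finset.range K, (2:ℝ)^j = 2^K - 1 := by
    rw [geom_sum_eq (by norm_num : (2:ℝ) ≠ 1)]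
    norm_num
  have h5 : ∑ j ∈ Finset.range K, (2:ℝ)^j / (Real.pi^2 * (h:ℝ)^2) =
      ((2:ℝ)^K - 1) / (Real.pi^2 * (h:ℝ)^2) := by
    rw [← Finset.sum_div, hgeom]
  have h2K : (2:ℝ)^K ≤ 2 * |(h:ℝ)| := by
    have hn : 2^(Nat.log 2 h.natAbs) ≤ h.natAbs := Nat.pow_log_le_self 2 hNA
    have hexp : (2:ℝ)^K = 2 * (2:ℝ)^(Nat.log 2 h.natAbs) := by rw [hK, pow_succ]; ring
    rw [hexp]
    have hcast : ((h.natAbs : ℕ) : ℝ) = |(h:ℝ)| := by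
      rw [Nat.cast_natAbs]
      simp
    have hnR : ((2:ℝ))^(Nat.log 2 h.natAbs) ≤ (h.natAbs : ℝ) := by exact_mod_cast hn
    nlinarith [hnR, hcast]
  have hfinal : (2 * |(h:ℝ)|) / (Real.pi^2 * (h:ℝ)^2) ≤ 1 / (Real.pi * |(h:ℝ)|) := by
    rw [div_le_div_iff₀ (by positivity) (by positivity)]
    have hsq : (h:ℝ)^2 = |(h:ℝ)|^2 := (_root_.sq_abs _).symm
    rw [hsq]
    have hπ3 : (2:ℝ) ≤ Real.pi := by nlinarith [Real.pi_gt_three]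
    nlinarith [mul_nonneg (mul_nonneg hπ.le (sub_nonneg.mpr hπ3)) (sq_nonneg |(h:ℝ)|), habs, hπ]
  calc |∑' j : ℕ, rcoef h j| ≤ ∑' j : ℕ, |rcoef h j| := h1
    _ ≤ ∑' j : ℕ, b j := h2
    _ = ∑ j ∈ Finset.range K, b j := h3
    _ ≤ ∑ j ∈ Finset.range K, (2:ℝ)^j / (Real.pi^2 * (h:ℝ)^2) := h4
    _ = ((2:ℝ)^K - 1) / (Real.pi^2 * (h:ℝ)^2) := h5
    _ ≤ (2 * |(h:ℝ)|) / (Real.pi^2 * (h:ℝ)^2) := by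
        gcongr
        linarith [h2K]
    _ ≤ 1 / (Real.pi * |(h:ℝ)|) := hfinal

end AuxTakagi

/-- The graph path of the Takagi function, f(t) = t + i·τ(t), belongs to S. -/
theorem stmt_15 :
    memS (fun t : ℝ => (t : ℂ) + Complex.I * (takagi t : ℂ)) := by
  have hf1 : ((1:ℝ) : ℂ) + Complex.I * ((takagi 1 : ℝ) : ℂ) = 1 := by
    rw [takagi_one]
    simp
  refine ⟨?_, ?_, ?_, ?_, ?_⟩
  · exact (Complex.continuous_ofReal.add (continuous_const.mul
      (Complex.continuous_ofReal.comp takagi_continuous))).continuousOn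
  · simp [takagi_zero]
  · simp only [hf1]
    simp
  · simp only [hf1]
    simp
  · intro h hh
    have hfun : (fun t : ℝ => ((t : ℂ) + Complex.I * (takagi t : ℂ)) -
        (t : ℂ) * (((1:ℝ):ℂ) + Complex.I * ((takagi 1 : ℝ) : ℂ))) =
        fun t : ℝ => Complex.I * ((takagi t : ℝ) : ℂ) := by
      funext t
      rw [hf1]
      ring
    have hcoeff : fourierCoeff01 (fun t => ((t : ℂ) + Complex.I * (takagi t : ℂ)) -
        (t : ℂ) * (((1:ℝ):ℂ) + Complex.I * ((takagi 1 : ℝ) : ℂ))) h =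
        Complex.I * ((∑' j : ℕ, rcoef h j : ℝ) : ℂ) := by
      rw [fourierCoeff01]
      have hE : ∀ t : ℝ, e (-(h : ℂ) * (t : ℂ)) = Complex.exp ((-2*Real.pi*Complex.I*h) * t) := by
        intro t
        rw [e]
        congr 1
        ring
      calc ∫ t in (0:ℝ)..1, (((t : ℂ) + Complex.I * (takagi t : ℂ)) -
              (t : ℂ) * (((1:ℝ):ℂ) + Complex.I * ((takagi 1 : ℝ) : ℂ))) * e (-(h : ℂ) * (t : ℂ))
          = ∫ t in (0:ℝ)..1, Complex.I *
              (((takagi t : ℝ) : ℂ) * Complex.exp ((-2*Real.pi*Complex.I*h) * t)) := by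
            apply intervalIntegral.integral_congr
            intro t _
            simp only [hf1, hE t]
            ring
        _ = Complex.I * ∫ t in (0:ℝ)..1,
              ((takagi t : ℝ) : ℂ) * Complex.exp ((-2*Real.pi*Complex.I*h) * t) :=
            intervalIntegral.integral_const_mul _ _
        _ = Complex.I * ((∑' j : ℕ, rcoef h j : ℝ) : ℂ) := by rw [tauhat_eq h hh]
    constructor
    · rw [hcoeff]
      simp
    · rw [hcoeff]
      rw [norm_mul, Complex.norm_I, one_mul, Complex.norm_real, Real.norm_eq_abs]
      exact (tsum_rcoef_bound h hh).1

end
end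

section
/- Let f ∈ F₀ be such that f(1) is a real number in [−2,2] and the function g(t) = f(t) − t·f(1) has total variation at most 2 on [0,1]. Then f belongs to S. -/
noncomputable section
open MeasureTheory Set

lemma abs_exp_mul_I_real (x : ℝ) (t : ℝ) :
    ‖Complex.exp ((x : ℂ) * Complex.I * (t : ℂ))‖ = 1 := by
  rw [Complex.norm_exp]
  norm_num [Complex.mul_re, Complex.mul_im]

lemma key_bound (g : ℝ → ℂ) (hg : ContinuousOn g (Icc 0 1)) (hg0 : g 0 = 0) (hg1 : g 1 = 0)
    (hvar : eVariationOn g (Icc 0 1) ≤ 2) (h : ℤ) (hh : h ≠ 0) :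
    ‖fourierCoeff01 g h‖ ≤ 1 / (Real.pi * |(h : ℝ)|) := by
  have hπ : (0:ℝ) < Real.pi := Real.pi_pos
  have hhabs : (1:ℝ) ≤ |(h:ℝ)| := by
    rw [← Int.cast_abs]; exact_mod_cast Int.one_le_abs hh
  have hhpos : (0:ℝ) < |(h:ℝ)| := lt_of_lt_of_le one_pos hhabs
  set c : ℂ := ((-2 * Real.pi * (h:ℝ) : ℝ) : ℂ) * Complex.I with hc
  have hcabs : ‖c‖ = 2 * Real.pi * |(h:ℝ)| := by
    rw [hc, norm_mul, Complex.norm_I, Complex.norm_real, Real.norm_eq_abs, mul_one]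
    rw [abs_mul, abs_mul]
    rw [abs_of_pos hπ]
    norm_num
  have hcne : c ≠ 0 := by
    intro hc0
    rw [hc0, norm_zero] at hcabs
    nlinarith
  have hexp1 : ∀ k : ℝ, ‖Complex.exp (c * (k:ℂ))‖ = 1 := fun k => abs_exp_mul_I_real _ k
  have hF : ∀ t : ℝ, e (-(h:ℂ) * (t:ℂ)) = Complex.exp (c * (t:ℂ)) := by
    intro t
    rw [e, hc]
    congr 1
    push_cast
    ring
  -- main: for every ε > 0
  refine le_of_forall_pos_le_add fun ε hε => ?_
  have hUC := (isCompact_Icc : IsCompact (Icc (0:ℝ) 1)).uniformContinuousOn_of_continuous hg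
  rw [Metric.uniformContinuousOn_iff] at hUC
  obtain ⟨δ, hδ0, hδ⟩ := hUC ε hε
  obtain ⟨n, hn⟩ := exists_nat_one_div_lt hδ0
  set N := n + 1 with hN
  have hN0 : (0:ℝ) < N := by positivity
  set a : ℕ → ℝ := fun k => ((min k N : ℕ) : ℝ) / N with ha
  have hak : ∀ k ≤ N, a k = (k : ℝ) / N := fun k hk => by
    simp only [ha]; rw [min_eq_left hk]
  have ha0 : a 0 = 0 := by simp [ha]
  have haN : a N = 1 := by
    rw [hak N le_rfl]; field_simp
  have hamono : Monotone a := by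
    intro i j hij
    have h1 : (min i N : ℕ) ≤ (min j N : ℕ) := min_le_min hij le_rfl
    simp only [ha]
    gcongr
  have hamem : ∀ k, a k ∈ Icc (0:ℝ) 1 := by
    intro k
    constructor
    · positivity
    · simp only [ha]
      rw [div_le_one hN0]
      exact_mod_cast min_le_right k N
  have hstep : ∀ k < N, a (k+1) - a k = 1 / N := by
    intro k hk
    rw [hak k hk.le, hak (k+1) hk, ] 
    push_cast
    ring
  -- integrability
  have hsub : ∀ k, uIcc (a k) (a (k+1)) ⊆ Icc (0:ℝ) 1 := by
    intro k
    rw [uIcc_of_le (hamono (Nat.le_succ k))]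
    exact Icc_subset_Icc (hamem k).1 (hamem (k+1)).2
  have hexpc : Continuous fun t : ℝ => Complex.exp (c * (t:ℂ)) := by
    exact Complex.continuous_exp.comp (continuous_const.mul Complex.continuous_ofReal)
  have hgint : ∀ k, IntervalIntegrable (fun t => g t * Complex.exp (c * (t:ℂ)))
      volume (a k) (a (k+1)) := by
    intro k
    exact ((hg.mono (hsub k)).mul hexpc.continuousOn).intervalIntegrable
  have herrint : ∀ k, IntervalIntegrable (fun t => (g t - g (a (k+1))) * Complex.exp (c * (t:ℂ)))
      volume (a k) (a (k+1)) := by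
    intro k
    exact (((hg.mono (hsub k)).sub continuousOn_const).mul hexpc.continuousOn).intervalIntegrable
  -- split into sum
  have hsplit : fourierCoeff01 g h = ∑ k ∈ Finset.range N,
      ∫ t in a k..a (k+1), g t * Complex.exp (c * (t:ℂ)) := by
    have hs := intervalIntegral.sum_integral_adjacent_intervals
      (f := fun t => g t * Complex.exp (c * (t:ℂ))) (μ := volume) (a := a) (n := N)
      (fun k _ => hgint k)
    rw [ha0, haN] at hs
    have heq : (∫ t in (0:ℝ)..1, g t * e (-(h:ℂ) * (t:ℂ)))
        = ∫ t in (0:ℝ)..1, g t * Complex.exp (c * (t:ℂ)) := by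
      apply intervalIntegral.integral_congr
      intro t _
      show g t * e (-(h:ℂ) * (t:ℂ)) = g t * Complex.exp (c * (t:ℂ))
      rw [hF t]
    rw [fourierCoeff01, heq]
    exact hs.symm
  -- piece identity
  have hpiece : ∀ k, (∫ t in a k..a (k+1), g t * Complex.exp (c * (t:ℂ)))
      = (∫ t in a k..a (k+1), (g t - g (a (k+1))) * Complex.exp (c * (t:ℂ)))
        + g (a (k+1)) * ((Complex.exp (c * (a (k+1) : ℂ)) - Complex.exp (c * (a k : ℂ))) / c) := by
    intro k
    have hconstint : IntervalIntegrable (fun t => g (a (k+1)) * Complex.exp (c * (t:ℂ)))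
        volume (a k) (a (k+1)) :=
      (continuousOn_const.mul hexpc.continuousOn).intervalIntegrable
    have heq : (∫ t in a k..a (k+1), g t * Complex.exp (c * (t:ℂ)))
        = ∫ t in a k..a (k+1), ((g t - g (a (k+1))) * Complex.exp (c * (t:ℂ))
            + g (a (k+1)) * Complex.exp (c * (t:ℂ))) := by
      apply intervalIntegral.integral_congr
      intro t _
      ring
    rw [heq, intervalIntegral.integral_add (herrint k) hconstint,
      intervalIntegral.integral_const_mul, integral_exp_mul_complex hcne]
  -- Abel summation
  have habel : ∑ k ∈ Finset.range N,
      g (a (k+1)) * ((Complex.exp (c * (a (k+1) : ℂ)) - Complex.exp (c * (a k : ℂ))) / c)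
      = - ∑ k ∈ Finset.range N,
          (g (a (k+1)) - g (a k)) * (Complex.exp (c * (a k : ℂ)) / c) := by
    have htel := Finset.sum_range_sub (f := fun k => g (a k) * Complex.exp (c * (a k : ℂ)) / c) N
    rw [ha0, haN, hg0, hg1] at htel
    simp only [zero_mul, zero_div, sub_zero] at htel
    have hterm : ∀ k, g (a (k+1)) * ((Complex.exp (c * (a (k+1) : ℂ)) - Complex.exp (c * (a k : ℂ))) / c)
        + (g (a (k+1)) - g (a k)) * (Complex.exp (c * (a k : ℂ)) / c)
        = g (a (k+1)) * Complex.exp (c * (a (k+1) : ℂ)) / c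
          - g (a k) * Complex.exp (c * (a k : ℂ)) / c := by
      intro k; ring
    have : ∑ k ∈ Finset.range N,
        (g (a (k+1)) * ((Complex.exp (c * (a (k+1) : ℂ)) - Complex.exp (c * (a k : ℂ))) / c)
          + (g (a (k+1)) - g (a k)) * (Complex.exp (c * (a k : ℂ)) / c)) = 0 := by
      simp_rw [hterm]
      rw [htel]
    rw [Finset.sum_add_distrib] at this
    linear_combination this
  -- sum of increments bounded by variation
  have hdist2 : ∑ k ∈ Finset.range N, dist (g (a (k+1))) (g (a k)) ≤ 2 := by
    have hs := eVariationOn.sum_le (f := g) (n := N) hamono hamem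
    have hne : ∀ i ∈ Finset.range N, edist (g (a (i+1))) (g (a i)) ≠ ⊤ :=
      fun i _ => edist_ne_top _ _
    have heqr : ∑ k ∈ Finset.range N, dist (g (a (k+1))) (g (a k))
        = (∑ k ∈ Finset.range N, edist (g (a (k+1))) (g (a k))).toReal := by
      rw [ENNReal.toReal_sum hne]
      exact Finset.sum_congr rfl fun k _ => dist_edist _ _
    rw [heqr]
    calc (∑ k ∈ Finset.range N, edist (g (a (k+1))) (g (a k))).toReal
        ≤ (2:ENNReal).toReal := ENNReal.toReal_mono (by norm_num) (le_trans hs hvar)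
      _ = 2 := by norm_num
  -- bound for the Abel sum
  have hTbound : ‖∑ k ∈ Finset.range N,
      (g (a (k+1)) - g (a k)) * (Complex.exp (c * (a k : ℂ)) / c)‖
      ≤ 1 / (Real.pi * |(h:ℝ)|) := by
    calc ‖∑ k ∈ Finset.range N, (g (a (k+1)) - g (a k)) * (Complex.exp (c * (a k : ℂ)) / c)‖
        ≤ ∑ k ∈ Finset.range N, ‖(g (a (k+1)) - g (a k)) * (Complex.exp (c * (a k : ℂ)) / c)‖ :=
          norm_sum_le _ _
      _ = ∑ k ∈ Finset.range N, dist (g (a (k+1))) (g (a k)) * (1 / (2 * Real.pi * |(h:ℝ)|)) := by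
          apply Finset.sum_congr rfl
          intro k _
          simp only [norm_mul, norm_div, Complex.dist_eq]
          rw [hexp1, hcabs]
      _ = (∑ k ∈ Finset.range N, dist (g (a (k+1))) (g (a k))) * (1 / (2 * Real.pi * |(h:ℝ)|)) :=
          (Finset.sum_mul _ _ _).symm
      _ ≤ 2 * (1 / (2 * Real.pi * |(h:ℝ)|)) := by
          apply mul_le_mul_of_nonneg_right hdist2
          positivity
      _ = 1 / (Real.pi * |(h:ℝ)|) := by
          field_simp
  -- bound for the error sum
  have hAbound : ‖∑ k ∈ Finset.range N,
      ∫ t in a k..a (k+1), (g t - g (a (k+1))) * Complex.exp (c * (t:ℂ))‖ ≤ ε := by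
    have h1N : (1:ℝ)/(N:ℝ) = 1/((n:ℝ)+1) := by rw [hN]; push_cast; ring
    calc ‖∑ k ∈ Finset.range N,
        ∫ t in a k..a (k+1), (g t - g (a (k+1))) * Complex.exp (c * (t:ℂ))‖
        ≤ ∑ k ∈ Finset.range N,
          ‖∫ t in a k..a (k+1), (g t - g (a (k+1))) * Complex.exp (c * (t:ℂ))‖ :=
          norm_sum_le _ _
      _ ≤ ∑ k ∈ Finset.range N, ε * (1/(N:ℝ)) := by
          apply Finset.sum_le_sum
          intro k hk
          have hkN := Finset.mem_range.mp hk
          have hb : ∀ x ∈ Set.uIoc (a k) (a (k+1)),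
              ‖(g x - g (a (k+1))) * Complex.exp (c * (x:ℂ))‖ ≤ ε := by
            intro x hx
            rw [Set.uIoc_of_le (hamono (Nat.le_succ k))] at hx
            have hx1 : x ∈ Icc (0:ℝ) 1 :=
              ⟨le_trans (hamem k).1 hx.1.le, le_trans hx.2 (hamem (k+1)).2⟩
            have hstepk := hstep k hkN
            have hdx : dist x (a (k+1)) < δ := by
              rw [Real.dist_eq, abs_of_nonpos (by linarith [hx.2])]
              have hx1' := hx.1
              rw [h1N] at hstepk
              linarith
            have hdg := hδ x hx1 (a (k+1)) (hamem (k+1)) hdx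
            rw [norm_mul, hexp1, mul_one]
            rw [dist_eq_norm] at hdg
            exact hdg.le
          have hbd := intervalIntegral.norm_integral_le_of_norm_le_const hb
          rw [abs_of_nonneg (sub_nonneg.mpr (hamono (Nat.le_succ k))), hstep k hkN] at hbd
          exact hbd
      _ = ε := by
          rw [Finset.sum_const, Finset.card_range, nsmul_eq_mul]
          field_simp
  -- assemble
  rw [hsplit]
  have hAB : ∑ k ∈ Finset.range N, ∫ t in a k..a (k+1), g t * Complex.exp (c * (t:ℂ))
      = (∑ k ∈ Finset.range N,
          ∫ t in a k..a (k+1), (g t - g (a (k+1))) * Complex.exp (c * (t:ℂ)))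
        + ∑ k ∈ Finset.range N,
            g (a (k+1)) * ((Complex.exp (c * (a (k+1) : ℂ)) - Complex.exp (c * (a k : ℂ))) / c) := by
    rw [← Finset.sum_add_distrib]
    exact Finset.sum_congr rfl fun k _ => hpiece k
  rw [hAB, habel]
  calc ‖(∑ k ∈ Finset.range N,
        ∫ t in a k..a (k+1), (g t - g (a (k+1))) * Complex.exp (c * (t:ℂ)))
        + -∑ k ∈ Finset.range N, (g (a (k+1)) - g (a k)) * (Complex.exp (c * (a k : ℂ)) / c)‖
      ≤ ‖∑ k ∈ Finset.range N,
          ∫ t in a k..a (k+1), (g t - g (a (k+1))) * Complex.exp (c * (t:ℂ))‖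
        + ‖∑ k ∈ Finset.range N, (g (a (k+1)) - g (a k)) * (Complex.exp (c * (a k : ℂ)) / c)‖ := by
        rw [← norm_neg (∑ k ∈ Finset.range N,
          (g (a (k+1)) - g (a k)) * (Complex.exp (c * (a k : ℂ)) / c))]
        exact norm_add_le _ _
    _ ≤ ε + 1 / (Real.pi * |(h:ℝ)|) := add_le_add hAbound hTbound
    _ = 1 / (Real.pi * |(h:ℝ)|) + ε := by ring

lemma intervalIntegral_conj {f : ℝ → ℂ} {a b : ℝ} :
    ∫ t in a..b, (starRingEnd ℂ) (f t) = (starRingEnd ℂ) (∫ t in a..b, f t) := by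
  simp [intervalIntegral, integral_conj, map_sub]

lemma re_zero (g : ℝ → ℂ)
    (hsym : ∀ t ∈ Icc (0:ℝ) 1, (starRingEnd ℂ) (g (1 - t)) = -g t) (h : ℤ) :
    (fourierCoeff01 g h).re = 0 := by
  have hFsub : ∀ t ∈ Icc (0:ℝ) 1,
      (starRingEnd ℂ) (g (1-t) * e (-(h:ℂ) * ((1-t : ℝ) : ℂ)))
        = -(g t * e (-(h:ℂ) * (t:ℂ))) := by
    intro t ht
    rw [map_mul, hsym t ht]
    have hconj_e : (starRingEnd ℂ) (e (-(h:ℂ) * ((1-t : ℝ) : ℂ))) = e (-(h:ℂ) * (t:ℂ)) := by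
      rw [e, e, ← Complex.exp_conj]
      have h1 : (starRingEnd ℂ) (2 * (Real.pi : ℂ) * Complex.I * (-(h:ℂ) * ((1-t : ℝ) : ℂ)))
          = (h:ℂ) * (2 * (Real.pi:ℂ) * Complex.I) + 2 * (Real.pi:ℂ) * Complex.I * (-(h:ℂ) * (t:ℂ)) := by
        simp only [map_mul, map_neg, Complex.conj_I, Complex.conj_ofReal, map_ofNat,
          map_intCast]
        push_cast
        ring
      rw [h1, Complex.exp_add, Complex.exp_int_mul_two_pi_mul_I, one_mul]
    rw [hconj_e]
    ring
  have h1 : (starRingEnd ℂ) (fourierCoeff01 g h)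
      = ∫ t in (0:ℝ)..1, (starRingEnd ℂ) (g t * e (-(h:ℂ) * (t:ℂ))) :=
    intervalIntegral_conj.symm
  have h2 : (∫ t in (0:ℝ)..1, (starRingEnd ℂ) (g t * e (-(h:ℂ) * (t:ℂ))))
      = ∫ t in (0:ℝ)..1, (starRingEnd ℂ) (g (1-t) * e (-(h:ℂ) * ((1-t : ℝ) : ℂ))) := by
    have := intervalIntegral.integral_comp_sub_left
      (fun t : ℝ => (starRingEnd ℂ) (g t * e (-(h:ℂ) * (t:ℂ)))) 1 (a := 0) (b := 1)
    simp only [sub_self, sub_zero] at this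
    exact this.symm
  have h3 : (∫ t in (0:ℝ)..1, (starRingEnd ℂ) (g (1-t) * e (-(h:ℂ) * ((1-t : ℝ) : ℂ))))
      = ∫ t in (0:ℝ)..1, -(g t * e (-(h:ℂ) * (t:ℂ))) := by
    apply intervalIntegral.integral_congr
    rw [uIcc_of_le (zero_le_one)]
    intro t ht
    exact hFsub t ht
  have h4 : (∫ t in (0:ℝ)..1, -(g t * e (-(h:ℂ) * (t:ℂ)))) = -(fourierCoeff01 g h) := by
    rw [intervalIntegral.integral_neg, fourierCoeff01]
  have hfin := h1.trans (h2.trans (h3.trans h4))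
  have := congrArg Complex.re hfin
  simp only [Complex.conj_re, Complex.neg_re] at this
  linarith

/-- If f ∈ F₀ (f continuous on [0,1], f(0)=0, f(t)+conj(f(1-t))=f(1)), f(1) is real in [-2,2],
and g(t) = f(t) - t·f(1) has total variation at most 2 on [0,1], then f ∈ S. -/
theorem stmt_19 (f : ℝ → ℂ)
    (hcont : ContinuousOn f (Set.Icc 0 1))
    (h0 : f 0 = 0)
    (hsym : ∀ t ∈ Set.Icc (0:ℝ) 1, f t + (starRingEnd ℂ) (f (1 - t)) = f 1)
    (him : (f 1).im = 0) (hre : |(f 1).re| ≤ 2)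
    (hvar : eVariationOn (fun t : ℝ => f t - (t : ℂ) * f 1) (Set.Icc 0 1) ≤ 2) :
    memS f := by
  set g : ℝ → ℂ := fun t : ℝ => f t - (t : ℂ) * f 1 with hg
  have hgcont : ContinuousOn g (Icc 0 1) :=
    hcont.sub ((Complex.continuous_ofReal.mul continuous_const).continuousOn)
  have hg0 : g 0 = 0 := by simp [hg, h0]
  have hg1 : g 1 = 0 := by simp [hg]
  have hc1 : (starRingEnd ℂ) (f 1) = f 1 := Complex.conj_eq_iff_im.mpr him
  have hgsym : ∀ t ∈ Icc (0:ℝ) 1, (starRingEnd ℂ) (g (1 - t)) = -g t := by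
    intro t ht
    have hft : (starRingEnd ℂ) (f (1 - t)) = f 1 - f t := by
      have := hsym t ht
      linear_combination this
    show (starRingEnd ℂ) (f (1-t) - ((1-t : ℝ) : ℂ) * f 1) = -(f t - (t:ℂ) * f 1)
    rw [map_sub, map_mul, Complex.conj_ofReal, hc1, hft]
    push_cast
    ring
  exact ⟨hcont, h0, him, hre, fun h hh =>
    ⟨re_zero g hgsym h, key_bound g hgcont hg0 hg1 hvar h hh⟩⟩


end
end
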